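/- arXiv:2302.14351 — 2 statements merged into one kernel-verified Lean document; each statement's English description precedes it below -/
import Mathlib

section
/- Let [X,B,m,ν] be a reversible random walk space, p > 1, and Ω ∈ B with 0 < ν(Ω) < ν(Ω_m) < ∞ and Ω satisfying a p-Poincaré inequality. Then λ_{m,p}(Ω) ≤ ν(Ω)^{p−1} / T_{m,p}(Ω). -/
open MeasureTheory ENNReal Filter Topology

namespace RandomWalkSpace

variable {X : Type*} [MeasurableSpace X]

/-- A random walk: a family of probability measures `m x`, measurably depending on `x`. -/
def IsRandomWalk (m : X → Measure X) : Prop :=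
  (∀ x, IsProbabilityMeasure (m x)) ∧
    ∀ A : Set X, MeasurableSet A → Measurable fun x => m x A

/-- Reversibility (detailed balance) of `ν` with respect to the random walk `m`. -/
def Reversible (m : X → Measure X) (ν : Measure X) : Prop :=
  ∀ A B : Set X, MeasurableSet A → MeasurableSet B →
    ∫⁻ x in A, m x B ∂ν = ∫⁻ x in B, m x A ∂ν

/-- The `m`-boundary of `Ω`. -/
def mBoundary (m : X → Measure X) (Ω : Set X) : Set X :=
  {x | x ∉ Ω ∧ 0 < m x Ω}

/-- The `m`-closure of `Ω`. -/
def mClosure (m : X → Measure X) (Ω : Set X) : Set X :=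
  Ω ∪ mBoundary m Ω

/-- `D` is `m`-connected (with respect to `ν`). -/
def mConnected (m : X → Measure X) (ν : Measure X) (D : Set X) : Prop :=
  ∀ A B : Set X, MeasurableSet A → MeasurableSet B → A ⊆ D → B ⊆ D →
    A ∪ B = D → 0 < ν A → 0 < ν B → 0 < ∫⁻ x in A, m x B ∂ν

/-- The `m`-perimeter of `Ω`. -/
noncomputable def mPerimeter (m : X → Measure X) (ν : Measure X) (Ω : Set X) : ℝ≥0∞ :=
  ∫⁻ x in Ω, m x Ωᶜ ∂ν

/-- `survival m Ω n x` is the mass of paths of `n` jumps starting at `x` that stay in `Ω`. -/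
noncomputable def survival (m : X → Measure X) (Ω : Set X) : ℕ → X → ℝ≥0∞
  | 0, _ => 1
  | n + 1, x => ∫⁻ y in Ω, survival m Ω n y ∂(m x)

/-- `gseq m ν Ω n` is the mass of paths of `n` jumps that start in `Ω` and stay in `Ω`. -/
noncomputable def gseq (m : X → Measure X) (ν : Measure X) (Ω : Set X) (n : ℕ) : ℝ≥0∞ :=
  ∫⁻ x in Ω, survival m Ω n x ∂ν

/-- The spectral `m`-heat content of `Ω` at time `t`. -/
noncomputable def heatContent (m : X → Measure X) (ν : Measure X) (Ω : Set X) (t : ℝ) : ℝ≥0∞ :=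
  ∑' k : ℕ, gseq m ν Ω k * ENNReal.ofReal (Real.exp (-t) * t ^ k / (Nat.factorial k))

/-- The nonlocal `p`-energy `∫_{Ω_m×Ω_m} |f(y) − f(x)|^p dm_x(y)dν(x)`. -/
noncomputable def energy (m : X → Measure X) (ν : Measure X) (Ω : Set X) (p : ℝ)
    (f : X → ℝ) : ℝ≥0∞ :=
  ∫⁻ x in mClosure m Ω, ∫⁻ y in mClosure m Ω, ENNReal.ofReal (|f y - f x| ^ p) ∂(m x) ∂ν

/-- `f ∈ L^p_0(Ω_m,ν)`: `f ∈ L^p(Ω_m,ν)` and `f = 0` ν-a.e. on `∂_m Ω`. -/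
def InLp0 (m : X → Measure X) (ν : Measure X) (Ω : Set X) (p : ℝ) (f : X → ℝ) : Prop :=
  MemLp f (ENNReal.ofReal p) (ν.restrict (mClosure m Ω)) ∧
    ∀ᵐ x ∂ν.restrict (mBoundary m Ω), f x = 0

/-- `Ω` satisfies a `p`-Poincaré inequality. -/
def PoincareInequality (m : X → Measure X) (ν : Measure X) (Ω : Set X) (p : ℝ) : Prop :=
  ∃ lam : ℝ, 0 < lam ∧ ∀ f : X → ℝ, InLp0 m ν Ω p f →
    ENNReal.ofReal lam * ∫⁻ x in Ω, ENNReal.ofReal (|f x| ^ p) ∂ν ≤ energy m ν Ω p f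

/-- The `m`-stress function of `Ω`. -/
def IsStressFunction (m : X → Measure X) (ν : Measure X) (Ω : Set X) (f : X → ℝ) : Prop :=
  InLp0 m ν Ω 2 f ∧ (∀ᵐ x ∂ν.restrict (mClosure m Ω), 0 ≤ f x) ∧
    ∀ᵐ x ∂ν.restrict Ω, -∫ y in mClosure m Ω, (f y - f x) ∂(m x) = 1

/-- The `p`-torsion function of `Ω`. -/
def IsPStressFunction (m : X → Measure X) (ν : Measure X) (Ω : Set X) (p : ℝ)
    (f : X → ℝ) : Prop :=
  InLp0 m ν Ω p f ∧ (∀ᵐ x ∂ν.restrict (mClosure m Ω), 0 ≤ f x) ∧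
    ∀ᵐ x ∂ν.restrict Ω,
      -∫ y in mClosure m Ω, |f y - f x| ^ (p - 2) * (f y - f x) ∂(m x) = 1

/-- The Rayleigh quotient infimum `λ_{m,p}(Ω)`. -/
noncomputable def rayleigh (m : X → Measure X) (ν : Measure X) (Ω : Set X) (p : ℝ) : ℝ≥0∞ :=
  ⨅ (f : X → ℝ) (_ : InLp0 m ν Ω p f)
    (_ : 0 < ∫⁻ x in Ω, ENNReal.ofReal (|f x| ^ p) ∂ν),
    (energy m ν Ω p f / 2) / ∫⁻ x in Ω, ENNReal.ofReal (|f x| ^ p) ∂ν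

/-- The `m`-Cheeger constant `h_1^m(Ω)`. -/
noncomputable def cheeger1 (m : X → Measure X) (ν : Measure X) (Ω : Set X) : ℝ≥0∞ :=
  ⨅ (E : Set X) (_ : MeasurableSet E) (_ : E ⊆ Ω) (_ : 0 < ν E),
    mPerimeter m ν E / ν E

/-- The `m`-`p`-Cheeger constant `h_p^m(Ω)`. -/
noncomputable def cheegerP (m : X → Measure X) (ν : Measure X) (Ω : Set X) (p : ℝ) : ℝ≥0∞ :=
  ⨅ (E : Set X) (_ : MeasurableSet E) (_ : E ⊆ Ω) (_ : 0 < ν E),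
    mPerimeter m ν E / ν E ^ p

/-- The functional `F_{m,p}(f) = (1/(2p)) ∫∫ |∇f|^p − ∫_Ω f`, with values in `EReal`. -/
noncomputable def torsionalFunctional (m : X → Measure X) (ν : Measure X) (Ω : Set X)
    (p : ℝ) (f : X → ℝ) : EReal :=
  ((energy m ν Ω p f / ENNReal.ofReal (2 * p) : ℝ≥0∞) : EReal) -
    ((∫ x in Ω, f x ∂ν : ℝ) : EReal)

end RandomWalkSpace

section RWSAux

open RandomWalkSpace ProbabilityTheory

variable {X : Type*} [MeasurableSpace X]

/-- The kernel `x ↦ (m x).restrict C`. -/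
noncomputable def rwKernel (m : X → Measure X)
    (hm : ∀ A : Set X, MeasurableSet A → Measurable fun x => m x A)
    (C : Set X) (hC : MeasurableSet C) : Kernel X X :=
  ⟨fun x => (m x).restrict C, Measure.measurable_of_measurable_coe _ fun s hs => by
    simp_rw [Measure.restrict_apply hs]
    exact hm (s ∩ C) (hs.inter hC)⟩

@[simp] lemma rwKernel_apply (m : X → Measure X)
    (hm : ∀ A : Set X, MeasurableSet A → Measurable fun x => m x A)
    (C : Set X) (hC : MeasurableSet C) (x : X) :
    rwKernel m hm C hC x = (m x).restrict C := rfl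

lemma rwKernel_isFinite (m : X → Measure X)
    (hm : ∀ A : Set X, MeasurableSet A → Measurable fun x => m x A)
    (hprob : ∀ x, IsProbabilityMeasure (m x))
    (C : Set X) (hC : MeasurableSet C) : IsFiniteKernel (rwKernel m hm C hC) := by
  refine ⟨⟨1, ENNReal.one_lt_top, fun x => ?_⟩⟩
  simp only [rwKernel_apply, Measure.restrict_apply_univ]
  haveI := hprob x
  exact (measure_mono (Set.subset_univ C)).trans (measure_univ).le

lemma rw_compProd_symm (m : X → Measure X) (ν : Measure X) [SigmaFinite ν]
    (hm : IsRandomWalk m) (hrev : Reversible m ν)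
    (C : Set X) (hC : MeasurableSet C) (hCfin : ν C < ⊤) :
    ((ν.restrict C) ⊗ₘ (rwKernel m hm.2 C hC)).map Prod.swap
      = (ν.restrict C) ⊗ₘ (rwKernel m hm.2 C hC) := by
  haveI : ProbabilityTheory.IsFiniteKernel (rwKernel m hm.2 C hC) := rwKernel_isFinite m hm.2 hm.1 C hC
  haveI : IsFiniteMeasure (ν.restrict C) :=
    ⟨by simpa [Measure.restrict_apply_univ] using hCfin⟩
  have hrect : ∀ s t : Set X, MeasurableSet s → MeasurableSet t →
      ((ν.restrict C) ⊗ₘ (rwKernel m hm.2 C hC)) (s ×ˢ t)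
        = ∫⁻ x in s ∩ C, m x (t ∩ C) ∂ν := by
    intro s t hs ht
    rw [Measure.compProd_apply_prod hs ht]
    rw [show ∫⁻ a in s, (rwKernel m hm.2 C hC a) t ∂(ν.restrict C)
        = ∫⁻ a, (rwKernel m hm.2 C hC a) t ∂((ν.restrict C).restrict s) from rfl,
      Measure.restrict_restrict hs]
    refine lintegral_congr fun a => ?_
    simp [Measure.restrict_apply' hC]
  refine ext_of_generate_finite _ generateFrom_prod.symm isPiSystem_prod ?_ ?_
  · rintro _ ⟨s, hs, t, ht, rfl⟩
    rw [Measure.map_apply measurable_swap ((hs : MeasurableSet s).prod ht),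
      Set.preimage_swap_prod, hrect t s ht hs, hrect s t hs ht,
      hrev (t ∩ C) (s ∩ C) (ht.inter hC) ((hs : MeasurableSet s).inter hC)]
  · rw [Measure.map_apply measurable_swap MeasurableSet.univ, Set.preimage_univ]

lemma rw_lintegral_swap (m : X → Measure X) (ν : Measure X) [SigmaFinite ν]
    (hm : IsRandomWalk m) (hrev : Reversible m ν)
    (C : Set X) (hC : MeasurableSet C) (hCfin : ν C < ⊤)
    (g : X × X → ℝ≥0∞) (hg : Measurable g) :
    ∫⁻ x in C, ∫⁻ y in C, g (x, y) ∂(m x) ∂ν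
      = ∫⁻ x in C, ∫⁻ y in C, g (y, x) ∂(m x) ∂ν := by
  haveI : ProbabilityTheory.IsFiniteKernel (rwKernel m hm.2 C hC) := rwKernel_isFinite m hm.2 hm.1 C hC
  haveI : IsFiniteMeasure (ν.restrict C) :=
    ⟨by simpa [Measure.restrict_apply_univ] using hCfin⟩
  have h1 := Measure.lintegral_compProd (μ := ν.restrict C) (κ := rwKernel m hm.2 C hC) hg
  have h2 := Measure.lintegral_compProd (μ := ν.restrict C) (κ := rwKernel m hm.2 C hC)
    (hg.comp measurable_swap)
  have h3 : ∫⁻ z, g (Prod.swap z) ∂((ν.restrict C) ⊗ₘ (rwKernel m hm.2 C hC))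
      = ∫⁻ z, g z ∂((ν.restrict C) ⊗ₘ (rwKernel m hm.2 C hC)) := by
    conv_rhs => rw [← rw_compProd_symm m ν hm hrev C hC hCfin]
    rw [lintegral_map hg measurable_swap]
  calc ∫⁻ x in C, ∫⁻ y in C, g (x, y) ∂(m x) ∂ν
      = ∫⁻ z, g z ∂((ν.restrict C) ⊗ₘ (rwKernel m hm.2 C hC)) := h1.symm
    _ = ∫⁻ z, g (Prod.swap z) ∂((ν.restrict C) ⊗ₘ (rwKernel m hm.2 C hC)) := h3.symm
    _ = ∫⁻ x in C, ∫⁻ y in C, g (y, x) ∂(m x) ∂ν := by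
        rw [show (fun z : X × X => g (Prod.swap z)) = g ∘ Prod.swap from rfl] at *
        exact h2

lemma rw_lintegral_holder (m : X → Measure X) (ν : Measure X) [SigmaFinite ν]
    (hm : IsRandomWalk m)
    (C : Set X) (hC : MeasurableSet C) (hCfin : ν C < ⊤)
    {q r : ℝ} (hqr : q.HolderConjugate r)
    (g h : X × X → ℝ≥0∞) (hg : Measurable g) (hh : Measurable h) :
    ∫⁻ x in C, ∫⁻ y in C, g (x, y) * h (x, y) ∂(m x) ∂ν
      ≤ (∫⁻ x in C, ∫⁻ y in C, g (x, y) ^ q ∂(m x) ∂ν) ^ (1/q)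
        * (∫⁻ x in C, ∫⁻ y in C, h (x, y) ^ r ∂(m x) ∂ν) ^ (1/r) := by
  haveI : ProbabilityTheory.IsFiniteKernel (rwKernel m hm.2 C hC) := rwKernel_isFinite m hm.2 hm.1 C hC
  haveI : IsFiniteMeasure (ν.restrict C) :=
    ⟨by simpa [Measure.restrict_apply_univ] using hCfin⟩
  have e1 : ∫⁻ z, g z * h z ∂((ν.restrict C) ⊗ₘ (rwKernel m hm.2 C hC))
      = ∫⁻ x in C, ∫⁻ y in C, g (x, y) * h (x, y) ∂(m x) ∂ν :=
    Measure.lintegral_compProd (hg.mul hh)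
  have e2 : ∫⁻ z, g z ^ q ∂((ν.restrict C) ⊗ₘ (rwKernel m hm.2 C hC))
      = ∫⁻ x in C, ∫⁻ y in C, g (x, y) ^ q ∂(m x) ∂ν :=
    Measure.lintegral_compProd (ENNReal.continuous_rpow_const.measurable.comp hg)
  have e3 : ∫⁻ z, h z ^ r ∂((ν.restrict C) ⊗ₘ (rwKernel m hm.2 C hC))
      = ∫⁻ x in C, ∫⁻ y in C, h (x, y) ^ r ∂(m x) ∂ν :=
    Measure.lintegral_compProd (ENNReal.continuous_rpow_const.measurable.comp hh)
  rw [← e1, ← e2, ← e3]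
  have := ENNReal.lintegral_mul_le_Lp_mul_Lq
    ((ν.restrict C) ⊗ₘ (rwKernel m hm.2 C hC)) hqr hg.aemeasurable hh.aemeasurable
  simpa [Pi.mul_apply] using this

lemma rw_null (m : X → Measure X) (ν : Measure X)
    (hm : IsRandomWalk m) (hrev : Reversible m ν)
    (C : Set X) (hC : MeasurableSet C)
    {N : Set X} (hN : MeasurableSet N) (hNC : N ⊆ C) (hN0 : ν N = 0) :
    ∀ᵐ x ∂ν.restrict C, m x N = 0 := by
  have h : ∫⁻ x in C, m x N ∂ν = 0 := by
    rw [hrev C N hC hN]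
    refine le_antisymm ?_ zero_le
    calc ∫⁻ x in N, m x C ∂ν ≤ ∫⁻ _ in N, 1 ∂ν := by
          refine lintegral_mono fun x => ?_
          haveI := hm.1 x
          exact (measure_mono (Set.subset_univ C)).trans (measure_univ).le
      _ = ν N := by simp
      _ = 0 := hN0
  have h2 := (lintegral_eq_zero_iff (hm.2 N hN)).mp h
  filter_upwards [h2] with x hx
  exact hx

end RWSAux

/-- `λ_{m,p}(Ω) ≤ ν(Ω)^{p−1} / T_{m,p}(Ω)`. -/
theorem rayleigh_le_torsion {X : Type*} [MeasurableSpace X]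
    (m : X → Measure X) (ν : Measure X) [SigmaFinite ν]
    (hm : RandomWalkSpace.IsRandomWalk m) (hrev : RandomWalkSpace.Reversible m ν)
    (p : ℝ) (hp : 1 < p)
    (Ω : Set X) (hΩ : MeasurableSet Ω)
    (h0 : 0 < ν Ω) (h1 : ν Ω < ν (RandomWalkSpace.mClosure m Ω))
    (h2 : ν (RandomWalkSpace.mClosure m Ω) < ⊤)
    (hpoinc : RandomWalkSpace.PoincareInequality m ν Ω p)
    (f : X → ℝ) (hf : RandomWalkSpace.IsPStressFunction m ν Ω p f) :
    RandomWalkSpace.rayleigh m ν Ω p ≤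
      ν Ω ^ (p - 1) / ENNReal.ofReal ((∫ x in Ω, f x ∂ν) ^ (p - 1)) := by
  classical
  open RandomWalkSpace in
  obtain ⟨lam, hlam, _⟩ := hpoinc
  clear hlam
  have hp0 : (0:ℝ) < p := lt_trans one_pos hp
  have hp1 : (0:ℝ) < p - 1 := sub_pos.mpr hp
  have hq := Real.HolderConjugate.conjExponent hp
  set q : ℝ := Real.conjExponent p with hqdef
  set C := RandomWalkSpace.mClosure m Ω with hCdef
  have hbdry : MeasurableSet (RandomWalkSpace.mBoundary m Ω) := by
    have : RandomWalkSpace.mBoundary m Ω = Ωᶜ ∩ {x | 0 < m x Ω} := by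
      ext x; simp [RandomWalkSpace.mBoundary]
    rw [this]
    exact hΩ.compl.inter (measurableSet_lt measurable_const (hm.2 Ω hΩ))
  have hC : MeasurableSet C := hΩ.union hbdry
  have hCfin : ν C < ⊤ := h2
  have hΩC : Ω ⊆ C := Set.subset_union_left
  have hdis : Disjoint Ω (RandomWalkSpace.mBoundary m Ω) :=
    Set.disjoint_left.mpr fun x hx hx' => hx'.1 hx
  have hresΩC : ν.restrict Ω ≤ ν.restrict C := Measure.restrict_mono hΩC le_rfl
  -- measurable representative
  obtain ⟨hmem, hbd⟩ := id hf.1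
  have hfs : AEStronglyMeasurable f (ν.restrict C) := hmem.1
  set F : X → ℝ := Ω.indicator (fun x => max (hfs.mk f x) 0) with hFdef
  have hFmeas : Measurable F :=
    (Measurable.max hfs.stronglyMeasurable_mk.measurable measurable_const).indicator hΩ
  have hF0 : ∀ x, 0 ≤ F x := by
    intro x
    by_cases hx : x ∈ Ω
    · rw [hFdef, Set.indicator_of_mem hx]; exact le_max_right _ _
    · rw [hFdef, Set.indicator_of_notMem hx]
  have hFout : ∀ x, x ∉ Ω → F x = 0 := fun x hx => Set.indicator_of_notMem hx _
  have hfF : f =ᵐ[ν.restrict C] F := by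
    have hres : ν.restrict C ≤ ν.restrict Ω + ν.restrict (RandomWalkSpace.mBoundary m Ω) := by
      rw [hCdef, RandomWalkSpace.mClosure]
      exact Measure.restrict_union_le _ _
    have hsum : ∀ᵐ x ∂(ν.restrict Ω + ν.restrict (RandomWalkSpace.mBoundary m Ω)), f x = F x := by
      rw [ae_add_measure_iff]
      constructor
      · have h1' : ∀ᵐ x ∂ν.restrict Ω, f x = hfs.mk f x := hfs.ae_eq_mk.filter_mono (ae_mono hresΩC)
        have h2' : ∀ᵐ x ∂ν.restrict Ω, 0 ≤ f x := Filter.Eventually.filter_mono (ae_mono hresΩC) hf.2.1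
        filter_upwards [h1', h2', ae_restrict_mem hΩ] with x he hnn hxΩ
        rw [hFdef]
        simp only [Set.indicator_of_mem hxΩ]
        rw [← he, max_eq_left hnn]
      · filter_upwards [hbd, ae_restrict_mem hbdry] with x h0' hxB
        rw [h0', hFout x hxB.1]
    exact Filter.Eventually.filter_mono (ae_mono hres) hsum
  have hfFΩ : f =ᵐ[ν.restrict Ω] F := hfF.filter_mono (ae_mono hresΩC)
  -- null set transfer
  have hnull : ν ({x | f x ≠ F x} ∩ C) = 0 := by
    have h := hfF
    rw [Filter.EventuallyEq, ae_iff, Measure.restrict_apply' hC] at h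
    exact h
  obtain ⟨N, hNsub, hNmeas, hN0⟩ := exists_measurable_superset_of_null hnull
  have hN'meas : MeasurableSet (N ∩ C) := hNmeas.inter hC
  have hN'0 : ν (N ∩ C) = 0 := measure_mono_null Set.inter_subset_left hN0
  have hmN' : ∀ᵐ x ∂ν.restrict C, m x (N ∩ C) = 0 :=
    rw_null m ν hm hrev C hC hN'meas Set.inter_subset_right hN'0
  have hinner : ∀ᵐ x ∂ν.restrict C, f =ᵐ[(m x).restrict C] F := by
    filter_upwards [hmN'] with x hx
    rw [Filter.EventuallyEq, ae_iff, Measure.restrict_apply' hC]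
    refine measure_mono_null (fun y hy => ?_) hx
    exact ⟨hNsub ⟨hy.1, hy.2⟩, hy.2⟩
  -- basic objects
  set u : X → ℝ≥0∞ := fun x => ENNReal.ofReal (F x) with hudef
  have humeas : Measurable u := hFmeas.ennreal_ofReal
  set G : X × X → ℝ≥0∞ := fun z => ENNReal.ofReal (F z.2 - F z.1) with hGdef
  have hGmeas : Measurable G :=
    ((hFmeas.comp measurable_snd).sub (hFmeas.comp measurable_fst)).ennreal_ofReal
  have hswap : ∀ g : X → X → ℝ≥0∞, Measurable (Function.uncurry g) →
      (∫⁻ x in C, ∫⁻ y in C, g x y ∂(m x) ∂ν)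
        = ∫⁻ x in C, ∫⁻ y in C, g y x ∂(m x) ∂ν :=
    fun g hg => rw_lintegral_swap m ν hm hrev C hC hCfin (Function.uncurry g) hg
  haveI : ProbabilityTheory.IsFiniteKernel (rwKernel m hm.2 C hC) := rwKernel_isFinite m hm.2 hm.1 C hC
  have hkmeas : ∀ g : X → X → ℝ≥0∞, Measurable (Function.uncurry g) →
      Measurable fun x => ∫⁻ y in C, g x y ∂(m x) := by
    intro g hg
    exact Measurable.lintegral_kernel_prod_right' (κ := rwKernel m hm.2 C hC) hg
  have hIadd : ∀ (g h : X → X → ℝ≥0∞), Measurable (Function.uncurry g) →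
      Measurable (Function.uncurry h) →
      ∫⁻ x in C, ∫⁻ y in C, (g x y + h x y) ∂(m x) ∂ν
        = (∫⁻ x in C, ∫⁻ y in C, g x y ∂(m x) ∂ν)
          + ∫⁻ x in C, ∫⁻ y in C, h x y ∂(m x) ∂ν := by
    intro g h hg hh
    rw [← lintegral_add_left (hkmeas g hg)]
    refine lintegral_congr fun x => ?_
    exact lintegral_add_left (hg.comp measurable_prodMk_left) _
  have hholder : ∀ (g h : X → X → ℝ≥0∞), Measurable (Function.uncurry g) →
      Measurable (Function.uncurry h) →
      ∫⁻ x in C, ∫⁻ y in C, g x y * h x y ∂(m x) ∂ν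
        ≤ (∫⁻ x in C, ∫⁻ y in C, g x y ^ q ∂(m x) ∂ν) ^ (1/q)
          * (∫⁻ x in C, ∫⁻ y in C, h x y ^ p ∂(m x) ∂ν) ^ (1/p) :=
    fun g h hg hh => rw_lintegral_holder m ν hm C hC hCfin hq.symm
      (Function.uncurry g) (Function.uncurry h) hg hh
  have hmxC : ∀ x, m x C ≤ 1 := by
    intro x
    haveI := hm.1 x
    exact (measure_mono (Set.subset_univ C)).trans measure_univ.le
  -- finiteness of Lp norm
  have hM : ∫⁻ x in C, u x ^ p ∂ν < ⊤ := by
    have h := hmem.2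
    rw [eLpNorm_eq_lintegral_rpow_enorm_toReal (ne_of_gt (ENNReal.ofReal_pos.mpr hp0))
      ENNReal.ofReal_ne_top, ENNReal.toReal_ofReal hp0.le,
      ENNReal.rpow_lt_top_iff_of_pos (by positivity)] at h
    refine lt_of_eq_of_lt ?_ h
    refine lintegral_congr_ae ?_
    filter_upwards [hfF] with x hx
    rw [show u x = ENNReal.ofReal (F x) from rfl, ← hx,
      ← Real.enorm_eq_ofReal (hx ▸ hF0 x)]
  -- swap instances and basic integral identities
  have hswapu : ∫⁻ x in C, ∫⁻ y in C, u x ^ p ∂(m x) ∂ν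
      = ∫⁻ x in C, ∫⁻ y in C, u y ^ p ∂(m x) ∂ν :=
    hswap (fun x _ => u x ^ p)
      (ENNReal.continuous_rpow_const.measurable.comp (humeas.comp measurable_fst))
  have hinner_le : ∫⁻ x in C, ∫⁻ y in C, u x ^ p ∂(m x) ∂ν ≤ ∫⁻ x in C, u x ^ p ∂ν := by
    refine lintegral_mono fun x => ?_
    rw [setLIntegral_const]
    calc u x ^ p * m x C ≤ u x ^ p * 1 := mul_le_mul_right (hmxC x) _
      _ = u x ^ p := mul_one _
  -- integral of f over Ω in terms of I
  have hintf : ∫ x in Ω, f x ∂ν = (∫⁻ x in Ω, u x ∂ν).toReal := by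
    rw [integral_congr_ae hfFΩ,
      integral_eq_lintegral_of_nonneg_ae (ae_of_all _ hF0) hFmeas.aestronglyMeasurable]
  rcases le_or_gt (∫ x in Ω, f x ∂ν) 0 with hneg | hpos
  · -- trivial case: the right-hand side is ⊤
    have h00 : (∫ x in Ω, f x ∂ν) = 0 := le_antisymm hneg (by rw [hintf]; exact ENNReal.toReal_nonneg)
    rw [h00, Real.zero_rpow hp1.ne', ENNReal.ofReal_zero,
      ENNReal.div_zero (ENNReal.rpow_pos h0 (h1.trans h2).ne).ne']
    exact le_top
  · -- main case
    set I := ∫⁻ x in Ω, u x ∂ν with hIdef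
    -- energy in terms of F
    have hEF : RandomWalkSpace.energy m ν Ω p f
        = ∫⁻ x in C, ∫⁻ y in C, ENNReal.ofReal (|F y - F x| ^ p) ∂(m x) ∂ν := by
      unfold RandomWalkSpace.energy
      refine lintegral_congr_ae ?_
      filter_upwards [hinner, hfF] with x hx hfx
      refine lintegral_congr_ae ?_
      filter_upwards [hx] with y hy
      rw [hy, hfx]
    have hofReal_max : ∀ t : ℝ, ENNReal.ofReal (max t 0) = ENNReal.ofReal t := by
      intro t
      rcases le_total t 0 with h | h
      · rw [max_eq_right h, ENNReal.ofReal_zero, ENNReal.ofReal_of_nonpos h]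
      · rw [max_eq_left h]
    have hsplit : ∀ x y : X,
        ENNReal.ofReal (|F y - F x| ^ p) = G (x, y) ^ p + G (y, x) ^ p := by
      intro x y
      simp only [hGdef]
      rcases le_total (F x) (F y) with h | h
      · rw [abs_of_nonneg (sub_nonneg.mpr h)]
        rw [ENNReal.ofReal_of_nonpos (by linarith : F x - F y ≤ 0),
          ENNReal.zero_rpow_of_pos hp0, add_zero,
          ENNReal.ofReal_rpow_of_nonneg (sub_nonneg.mpr h) hp0.le]
      · rw [abs_of_nonpos (sub_nonpos.mpr h), neg_sub]
        rw [ENNReal.ofReal_of_nonpos (by linarith : F y - F x ≤ 0),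
          ENNReal.zero_rpow_of_pos hp0, zero_add,
          ENNReal.ofReal_rpow_of_nonneg (sub_nonneg.mpr h) hp0.le]
    set S := ∫⁻ x in C, ∫⁻ y in C, G (x, y) ^ p ∂(m x) ∂ν with hSdef
    have hGp_meas : Measurable fun z : X × X => G z ^ p :=
      ENNReal.continuous_rpow_const.measurable.comp hGmeas
    have hGp1_meas : Measurable fun z : X × X => G z ^ (p - 1) :=
      ENNReal.continuous_rpow_const.measurable.comp hGmeas
    have hswapS : S = ∫⁻ x in C, ∫⁻ y in C, G (y, x) ^ p ∂(m x) ∂ν :=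
      hswap (fun x y => G (x, y) ^ p) hGp_meas
    have hES : RandomWalkSpace.energy m ν Ω p f = 2 * S := by
      rw [hEF]
      have step1 : ∫⁻ x in C, ∫⁻ y in C, ENNReal.ofReal (|F y - F x| ^ p) ∂(m x) ∂ν
          = (∫⁻ x in C, ∫⁻ y in C, G (x, y) ^ p ∂(m x) ∂ν)
            + ∫⁻ x in C, ∫⁻ y in C, G (y, x) ^ p ∂(m x) ∂ν := by
        have := hIadd (fun x y => G (x, y) ^ p) (fun x y => G (y, x) ^ p) hGp_meas
          (hGp_meas.comp measurable_swap)
        calc ∫⁻ x in C, ∫⁻ y in C, ENNReal.ofReal (|F y - F x| ^ p) ∂(m x) ∂ν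
            = ∫⁻ x in C, ∫⁻ y in C, (G (x, y) ^ p + G (y, x) ^ p) ∂(m x) ∂ν :=
              lintegral_congr fun x => lintegral_congr fun y => hsplit x y
          _ = _ := this
      rw [step1, ← hswapS, two_mul]
    -- energy is finite
    have hEfin : RandomWalkSpace.energy m ν Ω p f < ⊤ := by
      rw [hEF]
      have hptw : ∀ x y : X, ENNReal.ofReal (|F y - F x| ^ p)
          ≤ (2:ℝ≥0∞) ^ p * (u y ^ p + u x ^ p) := by
        intro x y
        have habs : |F y - F x| ≤ F y + F x := by
          rcases le_total (F x) (F y) with h | h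
          · rw [abs_of_nonneg (sub_nonneg.mpr h)]; linarith [hF0 x]
          · rw [abs_of_nonpos (sub_nonpos.mpr h)]; linarith [hF0 y]
        calc ENNReal.ofReal (|F y - F x| ^ p)
            = ENNReal.ofReal |F y - F x| ^ p :=
              (ENNReal.ofReal_rpow_of_nonneg (abs_nonneg _) hp0.le).symm
          _ ≤ (u y + u x) ^ p := by
              refine ENNReal.rpow_le_rpow ?_ hp0.le
              refine le_trans (ENNReal.ofReal_le_ofReal habs) ?_
              simp only [hudef]
              exact le_of_eq (ENNReal.ofReal_add (hF0 y) (hF0 x))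
          _ ≤ ((2:ℝ≥0∞) * (u y ⊔ u x)) ^ p := by
              refine ENNReal.rpow_le_rpow ?_ hp0.le
              rw [two_mul]
              exact add_le_add le_sup_left le_sup_right
          _ = (2:ℝ≥0∞) ^ p * (u y ⊔ u x) ^ p := ENNReal.mul_rpow_of_nonneg _ _ hp0.le
          _ ≤ (2:ℝ≥0∞) ^ p * (u y ^ p + u x ^ p) := by
              refine mul_le_mul_right ?_ _
              rcases le_total (u y) (u x) with h | h
              · rw [sup_eq_right.mpr h]; exact le_add_self
              · rw [sup_eq_left.mpr h]; exact le_self_add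
      have husum_meas : Measurable fun z : X × X => u z.2 ^ p + u z.1 ^ p :=
        ((ENNReal.continuous_rpow_const.measurable.comp (humeas.comp measurable_snd)).add
          (ENNReal.continuous_rpow_const.measurable.comp (humeas.comp measurable_fst)))
      have hsum_split : ∫⁻ x in C, ∫⁻ y in C, (u y ^ p + u x ^ p) ∂(m x) ∂ν
          = (∫⁻ x in C, ∫⁻ y in C, u y ^ p ∂(m x) ∂ν)
            + ∫⁻ x in C, ∫⁻ y in C, u x ^ p ∂(m x) ∂ν :=
        hIadd (fun _ y => u y ^ p) (fun x _ => u x ^ p)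
          (ENNReal.continuous_rpow_const.measurable.comp (humeas.comp measurable_snd))
          (ENNReal.continuous_rpow_const.measurable.comp (humeas.comp measurable_fst))
      calc ∫⁻ x in C, ∫⁻ y in C, ENNReal.ofReal (|F y - F x| ^ p) ∂(m x) ∂ν
          ≤ ∫⁻ x in C, ∫⁻ y in C, (2:ℝ≥0∞) ^ p * (u y ^ p + u x ^ p) ∂(m x) ∂ν :=
            lintegral_mono fun x => lintegral_mono fun y => hptw x y
        _ = (2:ℝ≥0∞) ^ p * ∫⁻ x in C, ∫⁻ y in C, (u y ^ p + u x ^ p) ∂(m x) ∂ν := by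
            have hk2 : Measurable fun x => ∫⁻ y in C, (u y ^ p + u x ^ p) ∂(m x) :=
              hkmeas (fun x y => u y ^ p + u x ^ p) husum_meas
            rw [← lintegral_const_mul _ hk2]
            refine lintegral_congr fun x => ?_
            exact lintegral_const_mul _ (husum_meas.comp measurable_prodMk_left)
        _ < ⊤ := by
            refine ENNReal.mul_lt_top (ENNReal.rpow_lt_top_of_nonneg hp0.le ENNReal.ofNat_ne_top) ?_
            rw [hsum_split, ← hswapu]
            exact ENNReal.add_lt_top.mpr ⟨hinner_le.trans_lt hM, hinner_le.trans_lt hM⟩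
    have hSfin : S ≠ ⊤ := by
      have h2S : 2 * S < ⊤ := by rw [← hES]; exact hEfin
      have : S ≤ 2 * S := by
        calc S = 1 * S := (one_mul S).symm
          _ ≤ 2 * S := mul_le_mul_left one_le_two S
      exact (this.trans_lt h2S).ne
    -- the p-laplacian identity, real version
    have hphi : ∀ s t : ℝ, |t - s| ^ (p - 2) * (t - s)
        = max (t - s) 0 ^ (p - 1) - max (s - t) 0 ^ (p - 1) := by
      intro s t
      rcases lt_trichotomy s t with h | h | h
      · have hd : 0 < t - s := sub_pos.mpr h
        have h5 := Real.rpow_add_one hd.ne' (p - 2)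
        rw [show (p - 2) + 1 = p - 1 by ring] at h5
        rw [abs_of_pos hd, max_eq_left hd.le, max_eq_right (by linarith : s - t ≤ 0),
          Real.zero_rpow hp1.ne', sub_zero, h5]
      · rw [h]
        simp [Real.zero_rpow hp1.ne']
      · have hd : 0 < s - t := sub_pos.mpr h
        have h5 := Real.rpow_add_one hd.ne' (p - 2)
        rw [show (p - 2) + 1 = p - 1 by ring] at h5
        rw [abs_of_neg (by linarith : t - s < 0), max_eq_right (by linarith : t - s ≤ 0),
          max_eq_left hd.le, Real.zero_rpow hp1.ne', zero_sub, neg_sub, h5]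
        ring
    -- the key pointwise identity
    have haux : ∀ s t : ℝ, 0 ≤ s → 0 ≤ t → s ≤ t →
        ENNReal.ofReal (|t - s| ^ p) + ENNReal.ofReal (t - s) ^ (p - 1) * ENNReal.ofReal s
          + ENNReal.ofReal (s - t) ^ (p - 1) * ENNReal.ofReal t
        = ENNReal.ofReal (t - s) ^ (p - 1) * ENNReal.ofReal t
          + ENNReal.ofReal (s - t) ^ (p - 1) * ENNReal.ofReal s := by
      intro s t hs ht hst
      have hd : (0:ℝ) ≤ t - s := sub_nonneg.mpr hst
      rw [ENNReal.ofReal_of_nonpos (by linarith : s - t ≤ 0),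
        ENNReal.zero_rpow_of_pos hp1, zero_mul, zero_mul, add_zero, add_zero,
        abs_of_nonneg hd, ENNReal.ofReal_rpow_of_nonneg hd hp1.le]
      have hdp : (t - s) ^ p = (t - s) ^ (p - 1) * (t - s) := by
        rcases eq_or_lt_of_le hd with h | h
        · rw [← h, Real.zero_rpow hp0.ne', Real.zero_rpow hp1.ne', zero_mul]
        · have h5 := Real.rpow_add_one h.ne' (p - 1)
          rw [show (p - 1) + 1 = p by ring] at h5
          exact h5
      rw [hdp, ENNReal.ofReal_mul (Real.rpow_nonneg hd _), ← mul_add,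
        ← ENNReal.ofReal_add hd hs, show t - s + s = t by ring]
    have hstar : ∀ x y : X,
        ENNReal.ofReal (|F y - F x| ^ p) + G (x, y) ^ (p - 1) * u x
            + G (y, x) ^ (p - 1) * u y
          = G (x, y) ^ (p - 1) * u y + G (y, x) ^ (p - 1) * u x := by
      intro x y
      simp only [hGdef, hudef]
      rcases le_total (F x) (F y) with h | h
      · exact haux (F x) (F y) (hF0 x) (hF0 y) h
      · have hx2 := haux (F y) (F x) (hF0 y) (hF0 x) h
        rw [abs_sub_comm, add_right_comm, hx2, add_comm]
    -- measurability of the pieces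
    have hdiff_meas : Measurable fun z : X × X => F z.2 - F z.1 :=
      (hFmeas.comp measurable_snd).sub (hFmeas.comp measurable_fst)
    have hm1 : Measurable fun z : X × X => ENNReal.ofReal (|F z.2 - F z.1| ^ p) :=
      (((Real.continuous_rpow_const hp0.le).measurable.comp hdiff_meas.abs)).ennreal_ofReal
    have hm2 : Measurable fun z : X × X => G z ^ (p - 1) * u z.1 :=
      hGp1_meas.mul (humeas.comp measurable_fst)
    have hm3 : Measurable fun z : X × X => G z ^ (p - 1) * u z.2 :=
      hGp1_meas.mul (humeas.comp measurable_snd)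
    have hm2' : Measurable fun z : X × X => G (z.2, z.1) ^ (p - 1) * u z.2 :=
      (hGp1_meas.comp measurable_swap).mul (humeas.comp measurable_snd)
    have hm3' : Measurable fun z : X × X => G (z.2, z.1) ^ (p - 1) * u z.1 :=
      (hGp1_meas.comp measurable_swap).mul (humeas.comp measurable_fst)
    -- integrated identity
    have hIt1 : ∫⁻ x in C, ∫⁻ y in C, (ENNReal.ofReal (|F y - F x| ^ p)
            + G (x, y) ^ (p - 1) * u x + G (y, x) ^ (p - 1) * u y) ∂(m x) ∂ν
        = ∫⁻ x in C, ∫⁻ y in C, (G (x, y) ^ (p - 1) * u y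
            + G (y, x) ^ (p - 1) * u x) ∂(m x) ∂ν :=
      lintegral_congr fun x => lintegral_congr fun y => by rw [hstar x y]
    have e1 : ∫⁻ x in C, ∫⁻ y in C, (ENNReal.ofReal (|F y - F x| ^ p)
            + G (x, y) ^ (p - 1) * u x + G (y, x) ^ (p - 1) * u y) ∂(m x) ∂ν
        = ((∫⁻ x in C, ∫⁻ y in C, ENNReal.ofReal (|F y - F x| ^ p) ∂(m x) ∂ν)
            + ∫⁻ x in C, ∫⁻ y in C, G (x, y) ^ (p - 1) * u x ∂(m x) ∂ν)
          + ∫⁻ x in C, ∫⁻ y in C, G (y, x) ^ (p - 1) * u y ∂(m x) ∂ν := by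
      have ha := hIadd (fun x y => ENNReal.ofReal (|F y - F x| ^ p) + G (x, y) ^ (p - 1) * u x)
        (fun x y => G (y, x) ^ (p - 1) * u y) (hm1.add hm2) hm2'
      have hb := hIadd (fun x y => ENNReal.ofReal (|F y - F x| ^ p))
        (fun x y => G (x, y) ^ (p - 1) * u x) hm1 hm2
      rw [ha, hb]
    have e3 : ∫⁻ x in C, ∫⁻ y in C, (G (x, y) ^ (p - 1) * u y
            + G (y, x) ^ (p - 1) * u x) ∂(m x) ∂ν
        = (∫⁻ x in C, ∫⁻ y in C, G (x, y) ^ (p - 1) * u y ∂(m x) ∂ν)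
          + ∫⁻ x in C, ∫⁻ y in C, G (y, x) ^ (p - 1) * u x ∂(m x) ∂ν :=
      hIadd (fun x y => G (x, y) ^ (p - 1) * u y) (fun x y => G (y, x) ^ (p - 1) * u x) hm3 hm3'
    have hsw1 : ∫⁻ x in C, ∫⁻ y in C, G (x, y) ^ (p - 1) * u x ∂(m x) ∂ν
        = ∫⁻ x in C, ∫⁻ y in C, G (y, x) ^ (p - 1) * u y ∂(m x) ∂ν :=
      hswap (fun x y => G (x, y) ^ (p - 1) * u x) hm2
    have hsw2 : ∫⁻ x in C, ∫⁻ y in C, G (x, y) ^ (p - 1) * u y ∂(m x) ∂ν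
        = ∫⁻ x in C, ∫⁻ y in C, G (y, x) ^ (p - 1) * u x ∂(m x) ∂ν :=
      hswap (fun x y => G (x, y) ^ (p - 1) * u y) hm3
    -- reduce to integrals over Ω
    have hCtoΩ : ∀ h : X → ℝ≥0∞, (∀ x, x ∉ Ω → h x = 0) →
        ∫⁻ x in C, h x ∂ν = ∫⁻ x in Ω, h x ∂ν := by
      intro h hh
      rw [hCdef, RandomWalkSpace.mClosure, Measure.restrict_union hdis hbdry,
        lintegral_add_measure]
      have hz : ∫⁻ x in RandomWalkSpace.mBoundary m Ω, h x ∂ν = 0 := by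
        rw [setLIntegral_congr_fun hbdry (fun x hx => hh x hx.1)]
        simp
      rw [hz, add_zero]
    set A : X → ℝ≥0∞ := fun x => ∫⁻ y in C, G (x, y) ^ (p - 1) ∂(m x) with hAdef
    set A' : X → ℝ≥0∞ := fun x => ∫⁻ y in C, G (y, x) ^ (p - 1) ∂(m x) with hA'def
    have huzero : ∀ x, x ∉ Ω → u x = 0 := fun x hx => by
      simp only [hudef]; rw [hFout x hx, ENNReal.ofReal_zero]
    have hPA : ∫⁻ x in C, ∫⁻ y in C, G (x, y) ^ (p - 1) * u x ∂(m x) ∂ν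
        = ∫⁻ x in Ω, u x * A x ∂ν := by
      have h1 : ∫⁻ x in C, ∫⁻ y in C, G (x, y) ^ (p - 1) * u x ∂(m x) ∂ν
          = ∫⁻ x in C, u x * A x ∂ν := by
        refine lintegral_congr fun x => ?_
        simp only [hAdef]
        rw [mul_comm (u x) _]
        have hmy : Measurable fun y => G (x, y) ^ (p - 1) :=
          ENNReal.continuous_rpow_const.measurable.comp (hGmeas.comp measurable_prodMk_left)
        exact lintegral_mul_const _ hmy
      rw [h1]
      exact hCtoΩ _ fun x hx => by rw [huzero x hx, zero_mul]
    have hP'A : ∫⁻ x in C, ∫⁻ y in C, G (y, x) ^ (p - 1) * u x ∂(m x) ∂ν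
        = ∫⁻ x in Ω, u x * A' x ∂ν := by
      have h1 : ∫⁻ x in C, ∫⁻ y in C, G (y, x) ^ (p - 1) * u x ∂(m x) ∂ν
          = ∫⁻ x in C, u x * A' x ∂ν := by
        refine lintegral_congr fun x => ?_
        simp only [hA'def]
        rw [mul_comm (u x) _]
        have hmy : Measurable fun y => G (y, x) ^ (p - 1) :=
          ENNReal.continuous_rpow_const.measurable.comp (hGmeas.comp measurable_prodMk_right)
        exact lintegral_mul_const _ hmy
      rw [h1]
      exact hCtoΩ _ fun x hx => by rw [huzero x hx, zero_mul]
    -- torsion equation for F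
    have hTF : ∀ᵐ x ∂ν.restrict Ω,
        ∫ y in C, |F y - F x| ^ (p - 2) * (F y - F x) ∂(m x) = -1 := by
      have hinnerΩ : ∀ᵐ x ∂ν.restrict Ω, f =ᵐ[(m x).restrict C] F :=
        Filter.Eventually.filter_mono (ae_mono hresΩC) hinner
      filter_upwards [hf.2.2, hinnerΩ, hfFΩ] with x hTx hin hfx
      have hTx' : -∫ y in C, |f y - f x| ^ (p - 2) * (f y - f x) ∂(m x) = 1 := hTx
      have heq : ∫ y in C, |F y - F x| ^ (p - 2) * (F y - F x) ∂(m x)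
          = ∫ y in C, |f y - f x| ^ (p - 2) * (f y - f x) ∂(m x) := by
        refine integral_congr_ae ?_
        filter_upwards [hin] with y hy
        rw [hy, hfx]
      rw [heq]
      linarith
    -- key a.e. identity between A and A'
    have hkey : ∀ᵐ x ∂ν.restrict Ω, A x ≠ ⊤ ∧ A' x = A x + 1 := by
      filter_upwards [hTF] with x hx
      have hαm : Measurable fun y => max (F y - F x) 0 ^ (p - 1) :=
        (Real.continuous_rpow_const hp1.le).measurable.comp
          ((hFmeas.sub measurable_const).max measurable_const)
      have hβm : Measurable fun y => max (F x - F y) 0 ^ (p - 1) :=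
        (Real.continuous_rpow_const hp1.le).measurable.comp
          ((measurable_const.sub hFmeas).max measurable_const)
      have hint : Integrable (fun y => |F y - F x| ^ (p - 2) * (F y - F x))
          ((m x).restrict C) := by
        by_contra hni
        rw [integral_undef hni] at hx
        norm_num at hx
      have habs : ∀ y, |(|F y - F x| ^ (p - 2) * (F y - F x))|
          = max (F y - F x) 0 ^ (p - 1) + max (F x - F y) 0 ^ (p - 1) := by
        intro y
        rcases le_total (F x) (F y) with h | h
        · rw [hphi (F x) (F y), max_eq_right (by linarith : F x - F y ≤ 0),
            Real.zero_rpow hp1.ne', sub_zero, add_zero]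
          exact abs_of_nonneg (Real.rpow_nonneg (le_max_right _ _) _)
        · rw [hphi (F x) (F y), max_eq_right (by linarith : F y - F x ≤ 0),
            Real.zero_rpow hp1.ne', zero_sub, abs_neg, zero_add]
          exact abs_of_nonneg (Real.rpow_nonneg (le_max_right _ _) _)
      have hαint : Integrable (fun y => max (F y - F x) 0 ^ (p - 1)) ((m x).restrict C) := by
        refine Integrable.mono hint.abs hαm.aestronglyMeasurable (ae_of_all _ fun y => ?_)
        rw [Real.norm_eq_abs, Real.norm_eq_abs, abs_abs, habs y,
          abs_of_nonneg (Real.rpow_nonneg (le_max_right _ _) _)]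
        have hβnn := Real.rpow_nonneg (le_max_right (F x - F y) 0) (p - 1)
        linarith
      have hβint : Integrable (fun y => max (F x - F y) 0 ^ (p - 1)) ((m x).restrict C) := by
        refine Integrable.mono hint.abs hβm.aestronglyMeasurable (ae_of_all _ fun y => ?_)
        rw [Real.norm_eq_abs, Real.norm_eq_abs, abs_abs, habs y,
          abs_of_nonneg (Real.rpow_nonneg (le_max_right _ _) _)]
        have hαnn := Real.rpow_nonneg (le_max_right (F y - F x) 0) (p - 1)
        linarith
      have hAeq : A x = ∫⁻ y, ENNReal.ofReal (max (F y - F x) 0 ^ (p - 1))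
          ∂((m x).restrict C) := by
        simp only [hAdef, hGdef]
        refine lintegral_congr fun y => ?_
        rw [← hofReal_max (F y - F x),
          ENNReal.ofReal_rpow_of_nonneg (le_max_right _ _) hp1.le]
      have hA'eq : A' x = ∫⁻ y, ENNReal.ofReal (max (F x - F y) 0 ^ (p - 1))
          ∂((m x).restrict C) := by
        simp only [hA'def, hGdef]
        refine lintegral_congr fun y => ?_
        rw [← hofReal_max (F x - F y),
          ENNReal.ofReal_rpow_of_nonneg (le_max_right _ _) hp1.le]
      have hAfin : A x ≠ ⊤ := by rw [hAeq]; exact hαint.lintegral_lt_top.ne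
      have hA'fin : A' x ≠ ⊤ := by rw [hA'eq]; exact hβint.lintegral_lt_top.ne
      have hαrep : ∫ y in C, max (F y - F x) 0 ^ (p - 1) ∂(m x) = (A x).toReal := by
        rw [integral_eq_lintegral_of_nonneg_ae
          (ae_of_all _ fun y => Real.rpow_nonneg (le_max_right _ _) _)
          hαm.aestronglyMeasurable, ← hAeq]
      have hβrep : ∫ y in C, max (F x - F y) 0 ^ (p - 1) ∂(m x) = (A' x).toReal := by
        rw [integral_eq_lintegral_of_nonneg_ae
          (ae_of_all _ fun y => Real.rpow_nonneg (le_max_right _ _) _)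
          hβm.aestronglyMeasurable, ← hA'eq]
      have hsub : ∫ y in C, |F y - F x| ^ (p - 2) * (F y - F x) ∂(m x)
          = (∫ y in C, max (F y - F x) 0 ^ (p - 1) ∂(m x))
            - ∫ y in C, max (F x - F y) 0 ^ (p - 1) ∂(m x) := by
        rw [← integral_sub hαint hβint]
        exact integral_congr_ae (ae_of_all _ fun y => hphi (F x) (F y))
      rw [hsub, hαrep, hβrep] at hx
      refine ⟨hAfin, ?_⟩
      have ht : (A' x).toReal = (A x).toReal + 1 := by linarith
      calc A' x = ENNReal.ofReal ((A' x).toReal) := (ENNReal.ofReal_toReal hA'fin).symm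
        _ = ENNReal.ofReal ((A x).toReal + 1) := by rw [ht]
        _ = ENNReal.ofReal ((A x).toReal) + ENNReal.ofReal 1 :=
            ENNReal.ofReal_add ENNReal.toReal_nonneg zero_le_one
        _ = A x + 1 := by rw [ENNReal.ofReal_toReal hAfin, ENNReal.ofReal_one]
    -- Q = P + I
    have hQP : ∫⁻ x in Ω, u x * A' x ∂ν = (∫⁻ x in Ω, u x * A x ∂ν) + I := by
      have h1 : ∫⁻ x in Ω, u x * A' x ∂ν = ∫⁻ x in Ω, (u x * A x + u x) ∂ν := by
        refine lintegral_congr_ae ?_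
        filter_upwards [hkey] with x hx
        rw [hx.2, mul_add, mul_one]
      rw [h1, lintegral_add_right _ humeas]
    -- P is finite, via Hoelder
    have hPfin : (∫⁻ x in Ω, u x * A x ∂ν) ≠ ⊤ := by
      have hHold : ∫⁻ x in C, ∫⁻ y in C, G (x, y) ^ (p - 1) * u x ∂(m x) ∂ν
          ≤ (∫⁻ x in C, ∫⁻ y in C, (G (x, y) ^ (p - 1)) ^ q ∂(m x) ∂ν) ^ (1/q)
            * (∫⁻ x in C, ∫⁻ y in C, u x ^ p ∂(m x) ∂ν) ^ (1/p) :=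
        hholder (fun x y => G (x, y) ^ (p - 1)) (fun x _ => u x)
          hGp1_meas (humeas.comp measurable_fst)
      have hGq : ∫⁻ x in C, ∫⁻ y in C, (G (x, y) ^ (p - 1)) ^ q ∂(m x) ∂ν = S := by
        rw [hSdef]
        refine lintegral_congr fun x => lintegral_congr fun y => ?_
        rw [← ENNReal.rpow_mul, hq.sub_one_mul_conj]
      have hfin : (∫⁻ x in C, ∫⁻ y in C, G (x, y) ^ (p - 1) * u x ∂(m x) ∂ν) < ⊤ := by
        refine lt_of_le_of_lt hHold ?_
        rw [hGq]
        refine ENNReal.mul_lt_top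
          (ENNReal.rpow_lt_top_of_nonneg hq.symm.one_div_nonneg hSfin) ?_
        exact ENNReal.rpow_lt_top_of_nonneg hq.one_div_nonneg (hinner_le.trans_lt hM).ne
      rw [hPA] at hfin
      exact hfin.ne
    -- assemble: energy = 2 I
    have hEFI : ∫⁻ x in C, ∫⁻ y in C, ENNReal.ofReal (|F y - F x| ^ p) ∂(m x) ∂ν
        = 2 * I := by
      have hmain := hIt1
      rw [e1, e3, ← hsw1, hsw2, hPA, hP'A, hQP] at hmain
      -- hmain : (EF + PΩ) + PΩ = (PΩ + I) + (PΩ + I)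
      have hne : (∫⁻ x in Ω, u x * A x ∂ν) + (∫⁻ x in Ω, u x * A x ∂ν) ≠ ⊤ :=
        ENNReal.add_ne_top.mpr ⟨hPfin, hPfin⟩
      have h2 : ((∫⁻ x in Ω, u x * A x ∂ν) + (∫⁻ x in Ω, u x * A x ∂ν))
            + (∫⁻ x in C, ∫⁻ y in C, ENNReal.ofReal (|F y - F x| ^ p) ∂(m x) ∂ν)
          = ((∫⁻ x in Ω, u x * A x ∂ν) + (∫⁻ x in Ω, u x * A x ∂ν)) + (I + I) := by
        calc ((∫⁻ x in Ω, u x * A x ∂ν) + (∫⁻ x in Ω, u x * A x ∂ν))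
              + (∫⁻ x in C, ∫⁻ y in C, ENNReal.ofReal (|F y - F x| ^ p) ∂(m x) ∂ν)
            = ((∫⁻ x in C, ∫⁻ y in C, ENNReal.ofReal (|F y - F x| ^ p) ∂(m x) ∂ν)
              + (∫⁻ x in Ω, u x * A x ∂ν)) + (∫⁻ x in Ω, u x * A x ∂ν) := by ring
          _ = ((∫⁻ x in Ω, u x * A x ∂ν) + I) + ((∫⁻ x in Ω, u x * A x ∂ν) + I) := hmain
          _ = ((∫⁻ x in Ω, u x * A x ∂ν) + (∫⁻ x in Ω, u x * A x ∂ν)) + (I + I) := by ring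
      have := (ENNReal.add_right_inj hne).mp h2
      rw [this, two_mul]
    have hEI : RandomWalkSpace.energy m ν Ω p f = 2 * I := by rw [hEF, hEFI]
    have hIfin : I ≠ ⊤ := by
      have h2I : 2 * I < ⊤ := by rw [← hEI]; exact hEfin
      have : I ≤ 2 * I := by
        calc I = 1 * I := (one_mul I).symm
          _ ≤ 2 * I := mul_le_mul_left one_le_two I
      exact (this.trans_lt h2I).ne
    have hofReal : ENNReal.ofReal (∫ x in Ω, f x ∂ν) = I := by
      rw [hintf, ENNReal.ofReal_toReal hIfin]
    have hIpos : 0 < I := by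
      rw [← hofReal]
      exact ENNReal.ofReal_pos.mpr hpos
    -- the Lp norm of f over Ω
    have hDu : ∫⁻ x in Ω, ENNReal.ofReal (|f x| ^ p) ∂ν = ∫⁻ x in Ω, u x ^ p ∂ν := by
      refine lintegral_congr_ae ?_
      filter_upwards [hfFΩ] with x hx
      rw [hx, abs_of_nonneg (hF0 x)]
      simp only [hudef]
      exact (ENNReal.ofReal_rpow_of_nonneg (hF0 x) hp0.le).symm
    have hDfin : (∫⁻ x in Ω, ENNReal.ofReal (|f x| ^ p) ∂ν) ≠ ⊤ := by
      rw [hDu]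
      exact ((lintegral_mono' hresΩC le_rfl).trans_lt hM).ne
    -- Hoelder over Ω
    have hHold2 : I ≤ (∫⁻ x in Ω, ENNReal.ofReal (|f x| ^ p) ∂ν) ^ (1/p) * (ν Ω) ^ (1/q) := by
      have h := ENNReal.lintegral_mul_le_Lp_mul_Lq (ν.restrict Ω) hq humeas.aemeasurable
        (aemeasurable_const (b := (1:ℝ≥0∞)))
      simp only [Pi.mul_apply, mul_one, ENNReal.one_rpow, lintegral_one,
        Measure.restrict_apply_univ] at h
      rw [hIdef, hDu]
      exact h
    have hIp : I ^ p ≤ (∫⁻ x in Ω, ENNReal.ofReal (|f x| ^ p) ∂ν) * (ν Ω) ^ (p - 1) := by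
      calc I ^ p ≤ ((∫⁻ x in Ω, ENNReal.ofReal (|f x| ^ p) ∂ν) ^ (1/p) * (ν Ω) ^ (1/q)) ^ p :=
          ENNReal.rpow_le_rpow hHold2 hp0.le
        _ = (∫⁻ x in Ω, ENNReal.ofReal (|f x| ^ p) ∂ν) * (ν Ω) ^ (p - 1) := by
          rw [ENNReal.mul_rpow_of_nonneg _ _ hp0.le, ← ENNReal.rpow_mul, ← ENNReal.rpow_mul,
            one_div_mul_cancel hp0.ne', ENNReal.rpow_one]
          congr 1
          have hqp : 1/q * p = p - 1 := by
            rw [mul_comm, mul_one_div]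
            exact hq.div_conj_eq_sub_one
          rw [hqp]
    have hDpos : 0 < ∫⁻ x in Ω, ENNReal.ofReal (|f x| ^ p) ∂ν := by
      rcases eq_or_lt_of_le (zero_le : 0 ≤ ∫⁻ x in Ω, ENNReal.ofReal (|f x| ^ p) ∂ν) with hD0 | hD0
      · exfalso
        rw [← hD0, zero_mul] at hIp
        have hz : I ^ p = 0 := le_antisymm hIp zero_le
        rw [ENNReal.rpow_eq_zero_iff] at hz
        rcases hz with ⟨h1', _⟩ | ⟨_, h2'⟩
        · exact hIpos.ne' h1'
        · linarith
      · exact hD0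
    -- apply the definition of rayleigh
    have hray : RandomWalkSpace.rayleigh m ν Ω p
        ≤ (RandomWalkSpace.energy m ν Ω p f / 2)
          / ∫⁻ x in Ω, ENNReal.ofReal (|f x| ^ p) ∂ν := by
      unfold RandomWalkSpace.rayleigh
      exact le_trans (iInf_le _ f) (le_trans (iInf_le _ hf.1) (iInf_le _ hDpos))
    have hE2 : RandomWalkSpace.energy m ν Ω p f / 2 = I := by
      rw [hEI, mul_comm, mul_div_assoc,
        ENNReal.div_self (two_ne_zero) ENNReal.ofNat_ne_top, mul_one]
    refine hray.trans ?_
    rw [hE2]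
    have hRHS : ENNReal.ofReal ((∫ x in Ω, f x ∂ν) ^ (p - 1)) = I ^ (p - 1) := by
      rw [← hofReal]
      exact (ENNReal.ofReal_rpow_of_nonneg hpos.le hp1.le).symm
    rw [hRHS]
    have hYne : I ^ (p - 1) ≠ 0 := (ENNReal.rpow_pos hIpos hIfin).ne'
    have hYtop : I ^ (p - 1) ≠ ⊤ := ENNReal.rpow_ne_top_of_nonneg hp1.le hIfin
    rw [ENNReal.div_le_iff hDpos.ne' hDfin,
      mul_comm (ν Ω ^ (p - 1) / I ^ (p - 1)) _, ← mul_div_assoc,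
      ENNReal.le_div_iff_mul_le (Or.inl hYne) (Or.inl hYtop)]
    have hII : I * I ^ (p - 1) = I ^ p := by
      calc I * I ^ (p - 1) = I ^ (1:ℝ) * I ^ (p - 1) := by rw [ENNReal.rpow_one]
        _ = I ^ (1 + (p - 1)) := (ENNReal.rpow_add 1 (p - 1) hIpos.ne' hIfin).symm
        _ = I ^ p := by congr 1; ring
    rw [hII]
    exact hIp
end

section
/- Let [X,B,m,ν] be a reversible random walk space and Ω ∈ B with Ω and Ω_m m-connected, 0 < ν(Ω) < ν(Ω_m) < ∞, and Ω satisfying a 2-Poincaré inequality. Then ν(Ω)²/P_m(Ω) ≤ T_m(Ω). Moreover, if Ω is m-calibrable, i.e. h_1^m(Ω) = P_m(Ω)/ν(Ω), then T_m(Ω) ≤ (1/2)·ν(Ω)²·ν(Ω_m)/P_m(Ω)². -/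
open MeasureTheory ENNReal Filter Topology

namespace RandomWalkSpace

open ProbabilityTheory

theorem master {X : Type*} [MeasurableSpace X] (m : X → Measure X) (ν : Measure X)
    (hprob : ∀ x, IsProbabilityMeasure (m x))
    (hmeas : ∀ A : Set X, MeasurableSet A → Measurable fun x => m x A)
    (hrev : Reversible m ν)
    (Ω : Set X) (hΩ : MeasurableSet Ω)
    (hconnm : mConnected m ν (mClosure m Ω))
    (h0 : 0 < ν Ω) (h1 : ν Ω < ν (mClosure m Ω))
    (h2 : ν (mClosure m Ω) < ⊤)
    (g : X → ℝ) (hgm : Measurable g) (hg0 : ∀ x, 0 ≤ g x)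
    (hgsupp : ∀ x, x ∉ Ω → g x = 0)
    (hgL2 : ∫⁻ x in mClosure m Ω, ENNReal.ofReal (g x ^ 2) ∂ν < ⊤)
    (hstress : ∀ᵐ x ∂ν.restrict Ω,
      -∫ y in mClosure m Ω, (g y - g x) ∂(m x) = 1) :
    ν Ω ^ 2 / mPerimeter m ν Ω ≤ ∫⁻ x in Ω, ENNReal.ofReal (g x) ∂ν ∧
      (cheeger1 m ν Ω = mPerimeter m ν Ω / ν Ω →
        ∫⁻ x in Ω, ENNReal.ofReal (g x) ∂ν ≤
          ν Ω ^ 2 * ν (mClosure m Ω) / (2 * mPerimeter m ν Ω ^ 2)) := by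
  classical
  set Γ : Set X := mBoundary m Ω with hΓdef
  set S : Set X := mClosure m Ω with hSdef
  have hΓmeas : MeasurableSet Γ := by
    have hset : Γ = Ωᶜ ∩ {x | 0 < m x Ω} := by
      ext x; simp [hΓdef, mBoundary, Set.mem_setOf_eq]
    rw [hset]
    exact hΩ.compl.inter (measurableSet_lt measurable_const (hmeas Ω hΩ))
  have hSmeas : MeasurableSet S := hΩ.union hΓmeas
  have hΩS : Ω ⊆ S := Set.subset_union_left
  have hΓS : Γ ⊆ S := Set.subset_union_right
  have hdisj : Disjoint Ω Γ := by
    rw [Set.disjoint_left]; intro x hx hx'; exact hx'.1 hx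
  have hνΩ_ne_top : ν Ω ≠ ⊤ := ((measure_mono hΩS).trans_lt h2).ne
  have hνS_ne_top : ν S ≠ ⊤ := h2.ne
  have hνΓpos : 0 < ν Γ := by
    by_contra h
    push_neg at h
    have hz : ν Γ = 0 := le_antisymm h zero_le
    have hle : ν S ≤ ν Ω + ν Γ := measure_union_le _ _
    rw [hz, add_zero] at hle
    exact absurd (h1.trans_le hle) (lt_irrefl _)
  have hm1 : ∀ (x : X) (A : Set X), m x A ≤ 1 := fun x A => by
    haveI := hprob x
    exact (measure_mono (Set.subset_univ A)).trans (by rw [measure_univ])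
  set P : ℝ≥0∞ := mPerimeter m ν Ω with hPdef
  have hPle : P ≤ ν Ω := by
    rw [hPdef, mPerimeter]
    calc ∫⁻ x in Ω, m x Ωᶜ ∂ν ≤ ∫⁻ _ in Ω, 1 ∂ν := lintegral_mono fun x => hm1 x _
    _ = ν Ω := by simp
  have hP_ne_top : P ≠ ⊤ := (hPle.trans_lt (lt_of_le_of_ne le_top hνΩ_ne_top)).ne
  have hPpos : 0 < P := by
    have hposint := hconnm Ω Γ hΩ hΓmeas hΩS hΓS rfl h0 hνΓpos
    refine hposint.trans_le ?_
    exact lintegral_mono fun x => measure_mono (fun y hy => hy.1)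
  -- a.e. the walk from Ω does not leave S
  have hSc_meas : MeasurableSet Sᶜ := hSmeas.compl
  have haeSc : ∀ᵐ x ∂ν.restrict Ω, m x Sᶜ = 0 := by
    have hzero : ∫⁻ x in Ω, m x Sᶜ ∂ν = 0 := by
      rw [hrev Ω Sᶜ hΩ hSc_meas]
      have : ∀ x ∈ Sᶜ, m x Ω = 0 := by
        intro x hx
        rcases (not_or.mp hx : x ∉ Ω ∧ x ∉ Γ) with ⟨hx1, hx2⟩
        by_contra hne
        exact hx2 ⟨hx1, pos_iff_ne_zero.mpr hne⟩
      calc ∫⁻ x in Sᶜ, m x Ω ∂ν = ∫⁻ _ in Sᶜ, 0 ∂ν :=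
            setLIntegral_congr_fun hSc_meas this
        _ = 0 := by simp
    exact (lintegral_eq_zero_iff (hmeas Sᶜ hSc_meas)).mp hzero
  -- the kernel and the symmetric measure π on X × X
  set κ : Kernel X X := ⟨fun x => (m x).restrict S,
    Measure.measurable_of_measurable_coe _ (fun B hB => by
      simp_rw [Measure.restrict_apply hB]
      exact hmeas _ (hB.inter hSmeas))⟩ with hκdef
  have hκ_apply : ∀ (x : X) (B : Set X), MeasurableSet B → κ x B = m x (B ∩ S) :=
    fun x B hB => Measure.restrict_apply hB
  have hκ_eq : ∀ x : X, κ x = (m x).restrict S := fun x => rfl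
  haveI : IsFiniteKernel κ := ⟨⟨1, ENNReal.one_lt_top, fun x => by
    rw [hκ_apply x Set.univ MeasurableSet.univ, Set.univ_inter]; exact hm1 x S⟩⟩
  haveI : IsFiniteMeasure (ν.restrict S) := ⟨by rw [Measure.restrict_apply_univ]; exact h2⟩
  set π : Measure (X × X) := (ν.restrict S).compProd κ with hπdef
  have hπprod : ∀ A B : Set X, MeasurableSet A → MeasurableSet B →
      π (A ×ˢ B) = ∫⁻ x in A ∩ S, m x (B ∩ S) ∂ν := by
    intro A B hA hB
    rw [hπdef, Measure.compProd_apply_prod hA hB, Measure.restrict_restrict hA]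
    exact lintegral_congr fun x => hκ_apply x B hB
  have hπeval : ∀ A B : Set X, MeasurableSet A → MeasurableSet B →
      π (A ×ˢ B) = π (B ×ˢ A) := by
    intro A B hA hB
    rw [hπprod A B hA hB, hπprod B A hB hA]
    exact hrev (A ∩ S) (B ∩ S) (hA.inter hSmeas) (hB.inter hSmeas)
  haveI hπfin : IsFiniteMeasure π := by
    constructor
    rw [← Set.univ_prod_univ, hπprod Set.univ Set.univ MeasurableSet.univ MeasurableSet.univ]
    calc ∫⁻ x in Set.univ ∩ S, m x (Set.univ ∩ S) ∂ν ≤ ∫⁻ _ in Set.univ ∩ S, 1 ∂ν :=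
          lintegral_mono fun x => hm1 x _
      _ = ν S := by simp
      _ < ⊤ := h2
  have hπuniv : π Set.univ ≤ ν S := by
    rw [← Set.univ_prod_univ, hπprod Set.univ Set.univ MeasurableSet.univ MeasurableSet.univ]
    calc ∫⁻ x in Set.univ ∩ S, m x (Set.univ ∩ S) ∂ν ≤ ∫⁻ _ in Set.univ ∩ S, 1 ∂ν :=
          lintegral_mono fun x => hm1 x _
      _ = ν S := by simp
  have hsym : π.map Prod.swap = π := by
    refine MeasureTheory.ext_of_generate_finite _ generateFrom_prod.symm isPiSystem_prod ?_ ?_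
    · rintro s ⟨A, hA, B, hB, rfl⟩
      rw [Measure.map_apply measurable_swap ((hA : MeasurableSet A).prod hB),
        Set.preimage_swap_prod, hπeval B A hB hA]
    · rw [Measure.map_apply measurable_swap MeasurableSet.univ, Set.preimage_univ]
  have hswap : ∀ F : X × X → ℝ≥0∞, Measurable F →
      ∫⁻ p, F (p.2, p.1) ∂π = ∫⁻ p, F p ∂π := by
    intro F hF
    have := lintegral_map (μ := π) hF measurable_swap
    rw [hsym] at this
    exact this.symm
  have hcomp : ∀ F : X × X → ℝ≥0∞, Measurable F →
      ∫⁻ p, F p ∂π = ∫⁻ x in S, ∫⁻ y, F (x, y) ∂((m x).restrict S) ∂ν := by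
    intro F hF
    rw [hπdef, Measure.lintegral_compProd hF]
    rfl
  -- key a.e. consequences of the stress equation
  have hkey : ∀ᵐ x ∂ν.restrict Ω, m x S = 1 ∧ 1 ≤ g x ∧
      ∫⁻ y, ENNReal.ofReal (g y) ∂((m x).restrict S) = ENNReal.ofReal (g x - 1) := by
    filter_upwards [haeSc, hstress] with x hx1 hx2
    haveI := hprob x
    have hmS : m x S = 1 := by
      have hc := measure_add_measure_compl (μ := m x) hSmeas
      rw [hx1, add_zero, measure_univ] at hc
      exact hc
    have hfinres : IsFiniteMeasure ((m x).restrict S) := inferInstance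
    have hint0 : ∫ y in S, (g y - g x) ∂(m x) = -1 := by linarith
    have hintg : Integrable (fun y => g y - g x) ((m x).restrict S) := by
      by_contra hni
      rw [MeasureTheory.integral_undef hni] at hint0
      norm_num at hint0
    have hgint : Integrable g ((m x).restrict S) := by
      have h2' := hintg.add (integrable_const (μ := (m x).restrict S) (g x))
      have heq : ((fun y => g y - g x) + fun _ => g x) = g := by funext y; simp
      rwa [heq] at h2'
    have hmass : ((m x).restrict S) Set.univ = 1 := by
      rw [Measure.restrict_apply_univ]; exact hmS
    have hval : ∫ y in S, g y ∂(m x) = g x - 1 := by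
      have hsub : ∫ y in S, (g y - g x) ∂(m x)
          = (∫ y in S, g y ∂(m x)) - ∫ _ in S, g x ∂(m x) :=
        integral_sub hgint (integrable_const _)
      rw [integral_const, measureReal_def, hmass] at hsub
      simp only [ENNReal.toReal_one, one_smul, smul_eq_mul] at hsub
      rw [hsub] at hint0
      linarith
    have hge : (0:ℝ) ≤ g x - 1 := by
      rw [← hval]
      exact integral_nonneg fun y => hg0 y
    refine ⟨hmS, by linarith, ?_⟩
    rw [← ofReal_integral_eq_lintegral_ofReal hgint (Filter.Eventually.of_forall hg0), hval]
  -- basic quantities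
  set T : ℝ≥0∞ := ∫⁻ x in Ω, ENNReal.ofReal (g x) ∂ν with hTdef
  set Bq : ℝ≥0∞ := ∫⁻ x in Ω, ENNReal.ofReal (g x ^ 2) ∂ν with hBdef
  have hB_ne_top : Bq ≠ ⊤ := by
    refine ((lintegral_mono' (Measure.restrict_mono hΩS le_rfl) le_rfl).trans_lt hgL2).ne
  have hT_ne_top : T ≠ ⊤ := by
    have hptwise : ∀ x : X, ENNReal.ofReal (g x) ≤ 1 + ENNReal.ofReal (g x ^ 2) := by
      intro x
      have h1' : g x ≤ 1 + g x ^ 2 := by nlinarith [sq_nonneg (g x - 1)]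
      calc ENNReal.ofReal (g x) ≤ ENNReal.ofReal (1 + g x ^ 2) := ENNReal.ofReal_le_ofReal h1'
        _ = 1 + ENNReal.ofReal (g x ^ 2) := by
            rw [ENNReal.ofReal_add zero_le_one (sq_nonneg _), ENNReal.ofReal_one]
    have : T ≤ ν Ω + Bq := by
      calc T ≤ ∫⁻ x in Ω, (1 + ENNReal.ofReal (g x ^ 2)) ∂ν := lintegral_mono hptwise
        _ = ν Ω + Bq := by
            rw [lintegral_add_left measurable_const]
            simp
            rfl
    exact (this.trans_lt (by
      exact ENNReal.add_lt_top.mpr ⟨lt_of_le_of_ne le_top hνΩ_ne_top, lt_of_le_of_ne le_top hB_ne_top⟩)).ne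
  -- splitting set-lintegrals over S = Ω ∪ Γ
  have hsplit : ∀ F : X → ℝ≥0∞,
      ∫⁻ x in S, F x ∂ν = ∫⁻ x in Ω, F x ∂ν + ∫⁻ x in Γ, F x ∂ν := by
    intro F
    have : S = Ω ∪ Γ := rfl
    rw [this, lintegral_union hΓmeas hdisj]
  -- measurable building blocks
  have hmF1 : Measurable fun p : X × X => ENNReal.ofReal (g p.1) :=
    ENNReal.measurable_ofReal.comp (hgm.comp measurable_fst)
  have hmF2 : Measurable fun p : X × X => ENNReal.ofReal (g p.2) :=
    ENNReal.measurable_ofReal.comp (hgm.comp measurable_snd)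
  have hmF1sq : Measurable fun p : X × X => ENNReal.ofReal (g p.1 ^ 2) :=
    ENNReal.measurable_ofReal.comp ((hgm.comp measurable_fst).pow_const 2)
  have hmF2sq : Measurable fun p : X × X => ENNReal.ofReal (g p.2 ^ 2) :=
    ENNReal.measurable_ofReal.comp ((hgm.comp measurable_snd).pow_const 2)
  have hmdiff : Measurable fun p : X × X => ENNReal.ofReal ((g p.2 - g p.1) ^ 2) :=
    ENNReal.measurable_ofReal.comp
      (((hgm.comp measurable_snd).sub (hgm.comp measurable_fst)).pow_const 2)
  -- the three basic integrals against π
  have hc2 : ∫⁻ p, ENNReal.ofReal (g p.1 ^ 2) ∂π = Bq := by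
    rw [hcomp _ hmF1sq]
    have hinner : ∀ x : X, ∫⁻ _, ENNReal.ofReal (g x ^ 2) ∂((m x).restrict S)
        = ENNReal.ofReal (g x ^ 2) * m x S := by
      intro x
      rw [lintegral_const, Measure.restrict_apply_univ]
    calc ∫⁻ x in S, (∫⁻ _, ENNReal.ofReal (g x ^ 2) ∂((m x).restrict S)) ∂ν
        = ∫⁻ x in S, ENNReal.ofReal (g x ^ 2) * m x S ∂ν := lintegral_congr hinner
      _ = ∫⁻ x in Ω, ENNReal.ofReal (g x ^ 2) * m x S ∂ν
          + ∫⁻ x in Γ, ENNReal.ofReal (g x ^ 2) * m x S ∂ν := hsplit _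
      _ = Bq + 0 := by
          congr 1
          · refine lintegral_congr_ae ?_
            filter_upwards [hkey] with x hx
            rw [hx.1, mul_one]
          · rw [← lintegral_zero (μ := ν.restrict Γ)]
            refine lintegral_congr_ae ?_
            filter_upwards [ae_restrict_mem hΓmeas] with x hx
            rw [hgsupp x hx.1]
            norm_num
      _ = Bq := add_zero _
  have hc3 : ∫⁻ p, ENNReal.ofReal (g p.2 ^ 2) ∂π = Bq := by
    calc ∫⁻ p, ENNReal.ofReal (g p.2 ^ 2) ∂π
        = ∫⁻ p, ENNReal.ofReal (g p.1 ^ 2) ∂π := by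
          simpa using hswap (fun p => ENNReal.ofReal (g p.1 ^ 2)) hmF1sq
      _ = Bq := hc2
  have hTone : ∫⁻ x in Ω, ENNReal.ofReal (g x - 1) ∂ν + ν Ω = T := by
    rw [hTdef]
    calc ∫⁻ x in Ω, ENNReal.ofReal (g x - 1) ∂ν + ν Ω
        = ∫⁻ x in Ω, (ENNReal.ofReal (g x - 1) + 1) ∂ν := by
          rw [lintegral_add_right _ measurable_const]
          simp
      _ = ∫⁻ x in Ω, ENNReal.ofReal (g x) ∂ν := by
          refine lintegral_congr_ae ?_
          filter_upwards [hkey] with x hx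
          have hgx : g x - 1 + 1 = g x := by ring
          rw [← ENNReal.ofReal_one, ← ENNReal.ofReal_add (by linarith [hx.2.1]) zero_le_one, hgx]
  -- the cross term
  set I3 : ℝ≥0∞ := ∫⁻ p, ENNReal.ofReal (g p.1) * ENNReal.ofReal (g p.2) ∂π with hI3def
  have hc1 : I3 + T = Bq := by
    have hI3eq : I3 = ∫⁻ x in Ω, ENNReal.ofReal (g x) * ENNReal.ofReal (g x - 1) ∂ν := by
      rw [hI3def, hcomp (fun p => ENNReal.ofReal (g p.1) * ENNReal.ofReal (g p.2)) (hmF1.mul hmF2)]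
      have hinner : ∀ x : X, ∫⁻ y in S, ENNReal.ofReal (g x) * ENNReal.ofReal (g y) ∂(m x)
          = ENNReal.ofReal (g x) * ∫⁻ y in S, ENNReal.ofReal (g y) ∂(m x) := by
        intro x
        exact lintegral_const_mul' _ _ ENNReal.ofReal_ne_top
      calc ∫⁻ x in S, (∫⁻ y in S, ENNReal.ofReal (g x) * ENNReal.ofReal (g y) ∂(m x)) ∂ν
          = ∫⁻ x in S, ENNReal.ofReal (g x) * ∫⁻ y in S, ENNReal.ofReal (g y) ∂(m x) ∂ν :=
            lintegral_congr hinner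
        _ = ∫⁻ x in Ω, ENNReal.ofReal (g x) * ∫⁻ y in S, ENNReal.ofReal (g y) ∂(m x) ∂ν
            + ∫⁻ x in Γ, ENNReal.ofReal (g x) * ∫⁻ y in S, ENNReal.ofReal (g y) ∂(m x) ∂ν :=
            hsplit _
        _ = ∫⁻ x in Ω, ENNReal.ofReal (g x) * ENNReal.ofReal (g x - 1) ∂ν + 0 := by
            congr 1
            · refine lintegral_congr_ae ?_
              filter_upwards [hkey] with x hx
              rw [hx.2.2]
            · rw [← lintegral_zero (μ := ν.restrict Γ)]
              refine lintegral_congr_ae ?_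
              filter_upwards [ae_restrict_mem hΓmeas] with x hx
              rw [hgsupp x hx.1]
              norm_num
        _ = ∫⁻ x in Ω, ENNReal.ofReal (g x) * ENNReal.ofReal (g x - 1) ∂ν := add_zero _
    rw [hI3eq, hTdef, ← lintegral_add_right _ hgm.ennreal_ofReal]
    refine lintegral_congr_ae ?_
    filter_upwards [hkey] with x hx
    have h1x : (0:ℝ) ≤ g x - 1 := by linarith [hx.2.1]
    rw [← ENNReal.ofReal_mul (hg0 x), ← ENNReal.ofReal_add (by nlinarith [hg0 x]) (hg0 x)]
    congr 1
    ring
  have hI3_ne_top : I3 ≠ ⊤ := by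
    refine (lt_of_le_of_lt ?_ (lt_of_le_of_ne le_top hB_ne_top)).ne
    rw [← hc1]; exact le_self_add
  -- the energy identity : ∫∫ (g y - g x)² dπ = 2 T
  set aE : ℝ≥0∞ := ∫⁻ p, ENNReal.ofReal ((g p.2 - g p.1) ^ 2) ∂π with haEdef
  have haE : aE = 2 * T := by
    have hpt : ∀ p : X × X,
        ENNReal.ofReal ((g p.2 - g p.1) ^ 2)
          + 2 * (ENNReal.ofReal (g p.1) * ENNReal.ofReal (g p.2))
        = ENNReal.ofReal (g p.1 ^ 2) + ENNReal.ofReal (g p.2 ^ 2) := by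
      intro p
      have hmn : (0:ℝ) ≤ g p.1 * g p.2 := mul_nonneg (hg0 p.1) (hg0 p.2)
      rw [← ENNReal.ofReal_mul (hg0 p.1), two_mul,
        ← ENNReal.ofReal_add hmn hmn,
        ← ENNReal.ofReal_add (sq_nonneg (g p.2 - g p.1)) (add_nonneg hmn hmn),
        ← ENNReal.ofReal_add (sq_nonneg (g p.1)) (sq_nonneg (g p.2))]
      congr 1
      ring
    have hRHS : ∫⁻ p, (ENNReal.ofReal (g p.1 ^ 2) + ENNReal.ofReal (g p.2 ^ 2)) ∂π
        = Bq + Bq := by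
      rw [lintegral_add_left hmF1sq, hc2, hc3]
    have hLHS : ∫⁻ p, (ENNReal.ofReal ((g p.2 - g p.1) ^ 2)
          + 2 * (ENNReal.ofReal (g p.1) * ENNReal.ofReal (g p.2))) ∂π
        = aE + 2 * I3 := by
      rw [lintegral_add_left hmdiff,
        lintegral_const_mul' _ _ (by norm_num : (2:ℝ≥0∞) ≠ ⊤)]
    have hsum : aE + 2 * I3 = Bq + Bq := by
      rw [← hRHS, ← hLHS]
      exact lintegral_congr hpt
    have hsum2 : aE + 2 * I3 = 2 * T + 2 * I3 := by
      rw [hsum, ← hc1]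
      ring
    exact (ENNReal.add_left_inj (ENNReal.mul_ne_top (by norm_num) hI3_ne_top)).mp hsum2
  -- the boundary mass identity : ∫_Γ ∫ g dκ = ν Ω
  have hJ : ∫⁻ x in Γ, (∫⁻ y in S, ENNReal.ofReal (g y) ∂(m x)) ∂ν = ν Ω := by
    have hL1 : ∫⁻ p, ENNReal.ofReal (g p.2) ∂π = T := by
      calc ∫⁻ p, ENNReal.ofReal (g p.2) ∂π
          = ∫⁻ p, ENNReal.ofReal (g p.1) ∂π := by
            simpa using hswap (fun p => ENNReal.ofReal (g p.1)) hmF1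
        _ = ∫⁻ x in S, (∫⁻ _ in S, ENNReal.ofReal (g x) ∂(m x)) ∂ν := hcomp _ hmF1
        _ = ∫⁻ x in S, ENNReal.ofReal (g x) * m x S ∂ν := by
            refine lintegral_congr fun x => ?_
            rw [lintegral_const, Measure.restrict_apply_univ]
        _ = ∫⁻ x in Ω, ENNReal.ofReal (g x) * m x S ∂ν
            + ∫⁻ x in Γ, ENNReal.ofReal (g x) * m x S ∂ν := hsplit _
        _ = T + 0 := by
            congr 1
            · refine lintegral_congr_ae ?_
              filter_upwards [hkey] with x hx
              rw [hx.1, mul_one]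
            · rw [← lintegral_zero (μ := ν.restrict Γ)]
              refine lintegral_congr_ae ?_
              filter_upwards [ae_restrict_mem hΓmeas] with x hx
              rw [hgsupp x hx.1]
              norm_num
        _ = T := add_zero _
    have hL2 : ∫⁻ p, ENNReal.ofReal (g p.2) ∂π
        = ∫⁻ x in Ω, ENNReal.ofReal (g x - 1) ∂ν
          + ∫⁻ x in Γ, (∫⁻ y in S, ENNReal.ofReal (g y) ∂(m x)) ∂ν := by
      rw [hcomp _ hmF2, hsplit]
      congr 1
      refine lintegral_congr_ae ?_
      filter_upwards [hkey] with x hx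
      exact hx.2.2
    have hfin1 : ∫⁻ x in Ω, ENNReal.ofReal (g x - 1) ∂ν ≠ ⊤ := by
      have hle : ∫⁻ x in Ω, ENNReal.ofReal (g x - 1) ∂ν ≤ T := by
        rw [← hTone]; exact le_self_add
      exact (hle.trans_lt (lt_of_le_of_ne le_top hT_ne_top)).ne
    have : ∫⁻ x in Ω, ENNReal.ofReal (g x - 1) ∂ν
          + ∫⁻ x in Γ, (∫⁻ y in S, ENNReal.ofReal (g y) ∂(m x)) ∂ν
        = ∫⁻ x in Ω, ENNReal.ofReal (g x - 1) ∂ν + ν Ω := by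
      rw [← hL2, hL1, ← hTone]
    exact (ENNReal.add_right_inj hfin1).mp this
  -- rpow helper
  have hrpow2 : ∀ z : ℝ≥0∞, z ^ (2:ℝ) = z * z := by
    intro z
    rw [show (2:ℝ) = ((2:ℕ):ℝ) by norm_num, ENNReal.rpow_natCast, sq]
  have hconj : Real.HolderConjugate 2 2 := Real.HolderConjugate.two_two
  have hsqrt_mul : ∀ d e : ℝ≥0∞, d ^ (1/2:ℝ) * e ^ (1/2:ℝ) * (d ^ (1/2:ℝ) * e ^ (1/2:ℝ))
      = d * e := by
    intro d e
    have hd : d ^ (1/2:ℝ) * d ^ (1/2:ℝ) = d := by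
      rw [← ENNReal.rpow_add_of_nonneg _ _ (by norm_num) (by norm_num)]
      norm_num
    have he : e ^ (1/2:ℝ) * e ^ (1/2:ℝ) = e := by
      rw [← ENNReal.rpow_add_of_nonneg _ _ (by norm_num) (by norm_num)]
      norm_num
    calc d ^ (1/2:ℝ) * e ^ (1/2:ℝ) * (d ^ (1/2:ℝ) * e ^ (1/2:ℝ))
        = d ^ (1/2:ℝ) * d ^ (1/2:ℝ) * (e ^ (1/2:ℝ) * e ^ (1/2:ℝ)) := by ring
      _ = d * e := by rw [hd, he]
  -- Part 1: the lower bound ν(Ω)²/P ≤ T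
  have hlower : ν Ω ^ 2 / P ≤ T := by
    set u : X × X → ℝ≥0∞ := fun p => if p.1 ∈ Ω then 0 else ENNReal.ofReal (g p.2) with hudef
    set v : X × X → ℝ≥0∞ := fun p =>
      if p.1 ∈ Ω then 0 else (if p.2 ∈ Ω then 1 else 0) with hvdef
    have hΩp : MeasurableSet {p : X × X | p.1 ∈ Ω} := hΩ.preimage measurable_fst
    have hΩp2 : MeasurableSet {p : X × X | p.2 ∈ Ω} := hΩ.preimage measurable_snd
    have hu_meas : Measurable u := Measurable.ite hΩp measurable_const hmF2
    have hv_meas : Measurable v :=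
      Measurable.ite hΩp measurable_const (Measurable.ite hΩp2 measurable_const measurable_const)
    have h_uv : ∀ p, u p * v p = u p := by
      intro p
      by_cases h1 : p.1 ∈ Ω
      · simp [hudef, hvdef, h1]
      · by_cases h2 : p.2 ∈ Ω
        · simp [hudef, hvdef, h1, h2]
        · simp [hudef, hvdef, h1, h2, hgsupp p.2 h2]
    have hIu : ∫⁻ p, u p ∂π = ν Ω := by
      rw [← hJ, hcomp _ hu_meas, hsplit]
      have hz : ∫⁻ x in Ω, (∫⁻ y in S, u (x, y) ∂(m x)) ∂ν = 0 := by
        rw [← lintegral_zero (μ := ν.restrict Ω)]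
        refine lintegral_congr_ae ?_
        filter_upwards [ae_restrict_mem hΩ] with x hx
        have : ∀ y, u (x, y) = 0 := fun y => if_pos hx
        simp [this]
      have hg2 : ∫⁻ x in Γ, (∫⁻ y in S, u (x, y) ∂(m x)) ∂ν
          = ∫⁻ x in Γ, (∫⁻ y in S, ENNReal.ofReal (g y) ∂(m x)) ∂ν := by
        refine lintegral_congr_ae ?_
        filter_upwards [ae_restrict_mem hΓmeas] with x hx
        have : ∀ y, u (x, y) = ENNReal.ofReal (g y) := fun y => if_neg hx.1
        simp [this]
      rw [hz, hg2, zero_add]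
    -- bound on ∫ u²
    set w : X × X → ℝ≥0∞ := fun p => if p.2 ∈ Ω then 0 else ENNReal.ofReal (g p.1) with hwdef
    have hw_meas : Measurable w := Measurable.ite hΩp2 measurable_const hmF1
    have huw : ∀ p : X × X, u p * u p + w p * w p ≤ ENNReal.ofReal ((g p.2 - g p.1) ^ 2) := by
      intro p
      by_cases h1 : p.1 ∈ Ω <;> by_cases h2 : p.2 ∈ Ω
      · simp [hudef, hwdef, h1, h2]
      · simp only [hudef, hwdef, if_pos h1, if_neg h2, zero_mul, zero_add]
        rw [← ENNReal.ofReal_mul (hg0 p.1)]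
        refine ENNReal.ofReal_le_ofReal ?_
        rw [hgsupp p.2 h2]
        nlinarith [hg0 p.1]
      · simp only [hudef, hwdef, if_neg h1, if_pos h2, mul_zero, add_zero]
        rw [← ENNReal.ofReal_mul (hg0 p.2)]
        refine ENNReal.ofReal_le_ofReal ?_
        rw [hgsupp p.1 h1]
        nlinarith [hg0 p.2]
      · simp [hudef, hwdef, h1, h2, hgsupp p.1 h1, hgsupp p.2 h2]
    have hwu : ∀ p : X × X, w p = u (p.2, p.1) := fun p => rfl
    have hIw2 : ∫⁻ p, w p * w p ∂π = ∫⁻ p, u p * u p ∂π := by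
      calc ∫⁻ p, w p * w p ∂π = ∫⁻ p, u (p.2, p.1) * u (p.2, p.1) ∂π :=
            lintegral_congr fun p => by rw [hwu]
        _ = ∫⁻ p, u p * u p ∂π := hswap _ (hu_meas.mul hu_meas)
    have hIu2 : ∫⁻ p, u p * u p ∂π ≤ T := by
      have hsum : ∫⁻ p, u p * u p ∂π + ∫⁻ p, w p * w p ∂π ≤ aE := by
        rw [← lintegral_add_left (f := fun p => u p * u p) (hu_meas.mul hu_meas), haEdef]
        exact lintegral_mono huw
      rw [hIw2, haE] at hsum
      have h2T : (2:ℝ≥0∞) * ∫⁻ p, u p * u p ∂π ≤ 2 * T := by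
        calc (2:ℝ≥0∞) * ∫⁻ p, u p * u p ∂π
            = ∫⁻ p, u p * u p ∂π + ∫⁻ p, u p * u p ∂π := two_mul _
          _ ≤ 2 * T := hsum
      exact (ENNReal.mul_le_mul_iff_right (by norm_num) (by norm_num)).mp h2T
    have hIv2 : ∫⁻ p, v p * v p ∂π ≤ P := by
      have hvv : ∀ p, v p * v p = v p := by
        intro p
        by_cases h1 : p.1 ∈ Ω <;> by_cases h2 : p.2 ∈ Ω <;> simp [hvdef, h1, h2]
      have hIv : ∫⁻ p, v p ∂π = ∫⁻ x in Γ, m x Ω ∂ν := by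
        rw [hcomp _ hv_meas, hsplit]
        have hz : ∫⁻ x in Ω, (∫⁻ y in S, v (x, y) ∂(m x)) ∂ν = 0 := by
          rw [← lintegral_zero (μ := ν.restrict Ω)]
          refine lintegral_congr_ae ?_
          filter_upwards [ae_restrict_mem hΩ] with x hx
          have : ∀ y, v (x, y) = 0 := fun y => if_pos hx
          simp [this]
        have hg2 : ∫⁻ x in Γ, (∫⁻ y in S, v (x, y) ∂(m x)) ∂ν
            = ∫⁻ x in Γ, m x Ω ∂ν := by
          refine lintegral_congr_ae ?_
          filter_upwards [ae_restrict_mem hΓmeas] with x hx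
          have hvy : ∀ y, v (x, y) = Ω.indicator (fun _ => 1) y := by
            intro y
            rw [Set.indicator_apply]
            exact if_neg hx.1
          calc ∫⁻ y in S, v (x, y) ∂(m x) = ∫⁻ y in S, Ω.indicator (fun _ => 1) y ∂(m x) :=
                lintegral_congr hvy
            _ = ∫⁻ y in Ω, (1:ℝ≥0∞) ∂((m x).restrict S) := lintegral_indicator hΩ _
            _ = ((m x).restrict S) Ω := by rw [setLIntegral_one, Measure.restrict_apply hΩ]
            _ = m x Ω := by rw [Measure.restrict_apply hΩ, Set.inter_eq_left.mpr hΩS]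
        rw [hz, hg2, zero_add]
      have hrevΓ : ∫⁻ x in Γ, m x Ω ∂ν = ∫⁻ x in Ω, m x Γ ∂ν := hrev Γ Ω hΓmeas hΩ
      calc ∫⁻ p, v p * v p ∂π = ∫⁻ p, v p ∂π := lintegral_congr hvv
        _ = ∫⁻ x in Ω, m x Γ ∂ν := by rw [hIv, hrevΓ]
        _ ≤ ∫⁻ x in Ω, m x Ωᶜ ∂ν := lintegral_mono fun x => measure_mono fun y hy => hy.1
        _ = P := rfl
    -- Cauchy–Schwarz
    have hCS := ENNReal.lintegral_mul_le_Lp_mul_Lq π hconj hu_meas.aemeasurable hv_meas.aemeasurable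
    have hCS' : ν Ω ≤ T ^ (1/2:ℝ) * P ^ (1/2:ℝ) := by
      have h1' : ∫⁻ p, (u * v) p ∂π = ν Ω := by
        rw [← hIu]
        exact lintegral_congr fun p => h_uv p
      rw [h1'] at hCS
      refine hCS.trans ?_
      have h2' : (∫⁻ p, u p ^ (2:ℝ) ∂π) ^ (1/2:ℝ) ≤ T ^ (1/2:ℝ) := by
        refine ENNReal.rpow_le_rpow ?_ (by norm_num)
        calc ∫⁻ p, u p ^ (2:ℝ) ∂π = ∫⁻ p, u p * u p ∂π :=
              lintegral_congr fun p => hrpow2 _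
          _ ≤ T := hIu2
      have h3' : (∫⁻ p, v p ^ (2:ℝ) ∂π) ^ (1/2:ℝ) ≤ P ^ (1/2:ℝ) := by
        refine ENNReal.rpow_le_rpow ?_ (by norm_num)
        calc ∫⁻ p, v p ^ (2:ℝ) ∂π = ∫⁻ p, v p * v p ∂π :=
              lintegral_congr fun p => hrpow2 _
          _ ≤ P := hIv2
      exact mul_le_mul' h2' h3'
    have hsq : ν Ω ^ 2 ≤ T * P := by
      calc ν Ω ^ 2 = ν Ω * ν Ω := sq (ν Ω) ▸ rfl
        _ ≤ T ^ (1/2:ℝ) * P ^ (1/2:ℝ) * (T ^ (1/2:ℝ) * P ^ (1/2:ℝ)) := mul_le_mul' hCS' hCS'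
        _ = T * P := hsqrt_mul T P
    rw [ENNReal.div_le_iff hPpos.ne' hP_ne_top]
    exact hsq
  refine ⟨hlower, fun hcal => ?_⟩
  -- Part 2 : the upper bound under calibrability
  have hcheeger : ∀ E : Set X, MeasurableSet E → E ⊆ Ω →
      P / ν Ω * ν E ≤ mPerimeter m ν E := by
    intro E hE hEΩ
    by_cases hE0 : ν E = 0
    · simp [hE0]
    · have hle : cheeger1 m ν Ω ≤ mPerimeter m ν E / ν E := by
        refine iInf_le_of_le E ?_
        refine iInf_le_of_le hE ?_
        refine iInf_le_of_le hEΩ ?_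
        exact iInf_le _ (pos_iff_ne_zero.mpr hE0)
      rw [hcal] at hle
      have hEfin : ν E ≠ ⊤ :=
        ((measure_mono hEΩ).trans_lt (lt_of_le_of_ne le_top hνΩ_ne_top)).ne
      calc P / ν Ω * ν E ≤ mPerimeter m ν E / ν E * ν E := mul_le_mul_left hle _
        _ = mPerimeter m ν E := ENNReal.div_mul_cancel hE0 hEfin
  set TV : ℝ≥0∞ := ∫⁻ p, ENNReal.ofReal |g p.2 - g p.1| ∂π with hTVdef
  have hmabs : Measurable fun p : X × X => ENNReal.ofReal |g p.2 - g p.1| :=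
    ENNReal.measurable_ofReal.comp
      (((hgm.comp measurable_snd).sub (hgm.comp measurable_fst)).abs)
  -- coarea lower bound for the total variation
  have hcoarea : 2 * (P / ν Ω) * T ≤ TV := by
    set F : X × X → ℝ → ℝ≥0∞ := fun p t =>
      (Set.Ioc (min (g p.1) (g p.2)) (max (g p.1) (g p.2))).indicator (fun _ => 1) t with hFdef
    have hF1 : ∀ p : X × X,
        ∫⁻ t in Set.Ioi (0:ℝ), F p t = ENNReal.ofReal |g p.2 - g p.1| := by
      intro p
      rw [hFdef]
      rw [lintegral_indicator measurableSet_Ioc, setLIntegral_one,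
        Measure.restrict_apply measurableSet_Ioc]
      have hsub : Set.Ioc (min (g p.1) (g p.2)) (max (g p.1) (g p.2)) ∩ Set.Ioi 0
          = Set.Ioc (min (g p.1) (g p.2)) (max (g p.1) (g p.2)) := by
        refine Set.inter_eq_left.mpr fun t ht => ?_
        have hmin0 : (0:ℝ) ≤ min (g p.1) (g p.2) := le_min (hg0 _) (hg0 _)
        exact lt_of_le_of_lt hmin0 ht.1
      rw [hsub, Real.volume_Ioc, max_sub_min_eq_abs, abs_sub_comm]
    have hmD : MeasurableSet {q : (X × X) × ℝ |
        min (g q.1.1) (g q.1.2) < q.2 ∧ q.2 ≤ max (g q.1.1) (g q.1.2)} := by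
      refine MeasurableSet.inter ?_ ?_
      · exact measurableSet_lt
          (((hgm.comp measurable_fst).comp measurable_fst).min
            ((hgm.comp measurable_snd).comp measurable_fst)) measurable_snd
      · exact measurableSet_le measurable_snd
          (((hgm.comp measurable_fst).comp measurable_fst).max
            ((hgm.comp measurable_snd).comp measurable_fst))
    have hFunc : Function.uncurry F = Set.indicator {q : (X × X) × ℝ |
        min (g q.1.1) (g q.1.2) < q.2 ∧ q.2 ≤ max (g q.1.1) (g q.1.2)} (fun _ => 1) := by
      funext q
      rw [Function.uncurry, hFdef]
      simp only [Set.indicator_apply, Set.mem_Ioc, Set.mem_setOf_eq]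
    have hFmeas : AEMeasurable (Function.uncurry F)
        (π.prod (volume.restrict (Set.Ioi (0:ℝ)))) := by
      rw [hFunc]
      exact (measurable_const.indicator hmD).aemeasurable
    have hswapF : TV = ∫⁻ t in Set.Ioi (0:ℝ), ∫⁻ p, F p t ∂π := by
      rw [hTVdef]
      calc ∫⁻ p, ENNReal.ofReal |g p.2 - g p.1| ∂π
          = ∫⁻ p, (∫⁻ t in Set.Ioi (0:ℝ), F p t) ∂π := (lintegral_congr hF1).symm
        _ = ∫⁻ t in Set.Ioi (0:ℝ), ∫⁻ p, F p t ∂π := lintegral_lintegral_swap hFmeas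
    have hslice : ∀ t : ℝ, 0 < t →
        2 * (P / ν Ω) * (ν.restrict Ω) {x | t ≤ g x} ≤ ∫⁻ p, F p t ∂π := by
      intro t ht
      set E : Set X := {x | t ≤ g x} with hEdef
      have hE : MeasurableSet E := measurableSet_le measurable_const hgm
      have hEΩ : E ⊆ Ω := by
        intro x hx
        by_contra hxo
        have hx' : t ≤ g x := hx
        rw [hgsupp x hxo] at hx'
        linarith
      have hFind : ∀ p : X × X, F p t = ((E ×ˢ Eᶜ) ∪ (Eᶜ ×ˢ E)).indicator (fun _ => 1) p := by
        intro p
        have hiff : (min (g p.1) (g p.2) < t ∧ t ≤ max (g p.1) (g p.2)) ↔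
            p ∈ (E ×ˢ Eᶜ) ∪ (Eᶜ ×ˢ E) := by
          simp only [Set.mem_union, Set.mem_prod, Set.mem_compl_iff, hEdef,
            Set.mem_setOf_eq, min_lt_iff, le_max_iff, not_le]
          constructor
          · rintro ⟨h1' | h1', h2' | h2'⟩
            · exact absurd h2' (not_le.mpr h1')
            · exact Or.inr ⟨h1', h2'⟩
            · exact Or.inl ⟨h2', h1'⟩
            · exact absurd h2' (not_le.mpr h1')
          · rintro (⟨ha, hb⟩ | ⟨ha, hb⟩)
            · exact ⟨Or.inr hb, Or.inl ha⟩
            · exact ⟨Or.inl ha, Or.inr hb⟩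
        rw [hFdef]
        simp only [Set.indicator_apply, Set.mem_Ioc]
        exact if_congr hiff rfl rfl
      have hperE : π (E ×ˢ Eᶜ) = mPerimeter m ν E := by
        rw [hπprod E Eᶜ hE hE.compl, Set.inter_eq_left.mpr (hEΩ.trans hΩS)]
        refine lintegral_congr_ae ?_
        have haeE : ∀ᵐ x ∂ν.restrict E, m x Sᶜ = 0 :=
          ae_restrict_of_ae_restrict_of_subset hEΩ haeSc
        filter_upwards [haeE] with x hx
        refine le_antisymm (measure_mono Set.inter_subset_left) ?_
        calc m x Eᶜ = m x ((Eᶜ ∩ S) ∪ (Eᶜ ∩ Sᶜ)) := by rw [Set.inter_union_compl]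
          _ ≤ m x (Eᶜ ∩ S) + m x (Eᶜ ∩ Sᶜ) := measure_union_le _ _
          _ ≤ m x (Eᶜ ∩ S) + m x Sᶜ :=
              add_le_add le_rfl (measure_mono Set.inter_subset_right)
          _ = m x (Eᶜ ∩ S) := by rw [hx, add_zero]
      have hdisj2 : Disjoint (E ×ˢ Eᶜ) (Eᶜ ×ˢ E) := by
        rw [Set.disjoint_left]
        rintro p ⟨hp1, hp2⟩ ⟨hp3, hp4⟩
        exact hp3 hp1
      have hval : ∫⁻ p, F p t ∂π = 2 * mPerimeter m ν E := by
        calc ∫⁻ p, F p t ∂π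
            = ∫⁻ p, ((E ×ˢ Eᶜ) ∪ (Eᶜ ×ˢ E)).indicator (fun _ => 1) p ∂π :=
              lintegral_congr hFind
          _ = π ((E ×ˢ Eᶜ) ∪ (Eᶜ ×ˢ E)) := by
              rw [lintegral_indicator ((hE.prod hE.compl).union (hE.compl.prod hE)),
                setLIntegral_one]
          _ = π (E ×ˢ Eᶜ) + π (Eᶜ ×ˢ E) := measure_union hdisj2 (hE.compl.prod hE)
          _ = 2 * mPerimeter m ν E := by
              rw [hπeval Eᶜ E hE.compl hE, hperE, two_mul]
      rw [hval]
      have hres : (ν.restrict Ω) E ≤ ν E := by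
        rw [Measure.restrict_apply hE]
        exact measure_mono Set.inter_subset_left
      calc 2 * (P / ν Ω) * (ν.restrict Ω) E ≤ 2 * (P / ν Ω) * ν E := by gcongr
        _ = 2 * (P / ν Ω * ν E) := by ring
        _ ≤ 2 * mPerimeter m ν E := by
            gcongr
            exact hcheeger E hE hEΩ
    have hlayer : T = ∫⁻ t in Set.Ioi (0:ℝ), (ν.restrict Ω) {x | t ≤ g x} := by
      rw [hTdef]
      exact lintegral_eq_lintegral_meas_le (ν.restrict Ω)
        (Filter.Eventually.of_forall hg0) hgm.aemeasurable
    have hc_ne_top : (2:ℝ≥0∞) * (P / ν Ω) ≠ ⊤ :=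
      ENNReal.mul_ne_top (by norm_num) (ENNReal.div_lt_top hP_ne_top h0.ne').ne
    calc 2 * (P / ν Ω) * T
        = ∫⁻ t in Set.Ioi (0:ℝ), 2 * (P / ν Ω) * (ν.restrict Ω) {x | t ≤ g x} := by
          rw [hlayer, lintegral_const_mul' _ _ hc_ne_top]
      _ ≤ ∫⁻ t in Set.Ioi (0:ℝ), ∫⁻ p, F p t ∂π := by
          refine lintegral_mono_ae ?_
          rw [ae_restrict_iff' measurableSet_Ioi]
          exact Filter.Eventually.of_forall fun t ht => hslice t ht
      _ = TV := hswapF.symm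
  -- Cauchy–Schwarz upper bound for the total variation
  have hTV_CS : TV ≤ (2 * T) ^ (1/2:ℝ) * ν S ^ (1/2:ℝ) := by
    have hCS := ENNReal.lintegral_mul_le_Lp_mul_Lq π hconj hmabs.aemeasurable
      (aemeasurable_const (b := (1:ℝ≥0∞)))
    have hl : ∫⁻ p, (((fun p : X × X => ENNReal.ofReal |g p.2 - g p.1|) *
          (fun _ => 1) : X × X → ℝ≥0∞)) p ∂π = TV := by
      rw [hTVdef]
      refine lintegral_congr fun p => ?_
      simp [Pi.mul_apply]
    rw [hl] at hCS
    refine hCS.trans (mul_le_mul' ?_ ?_)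
    · refine ENNReal.rpow_le_rpow ?_ (by norm_num)
      calc ∫⁻ p, ENNReal.ofReal |g p.2 - g p.1| ^ (2:ℝ) ∂π
          = ∫⁻ p, ENNReal.ofReal ((g p.2 - g p.1) ^ 2) ∂π := by
            refine lintegral_congr fun p => ?_
            rw [hrpow2, ← ENNReal.ofReal_mul (abs_nonneg _), abs_mul_abs_self, sq]
        _ ≤ 2 * T := le_of_eq haE
    · refine ENNReal.rpow_le_rpow ?_ (by norm_num)
      calc ∫⁻ _, (1:ℝ≥0∞) ^ (2:ℝ) ∂π = π Set.univ := by simp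
        _ ≤ ν S := hπuniv
  -- conclude
  by_cases hT0 : T = 0
  · rw [hT0]
    exact zero_le
  have hsq2 : (2 * (P / ν Ω) * T) * (2 * (P / ν Ω) * T) ≤ 2 * T * ν S := by
    calc (2 * (P / ν Ω) * T) * (2 * (P / ν Ω) * T)
        ≤ ((2 * T) ^ (1/2:ℝ) * ν S ^ (1/2:ℝ)) * ((2 * T) ^ (1/2:ℝ) * ν S ^ (1/2:ℝ)) :=
          mul_le_mul' (hcoarea.trans hTV_CS) (hcoarea.trans hTV_CS)
      _ = 2 * T * ν S := hsqrt_mul _ _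
  have hT2 : (2:ℝ≥0∞) * T ≠ 0 := by
    simp [hT0]
  have hT2top : (2:ℝ≥0∞) * T ≠ ⊤ := ENNReal.mul_ne_top (by norm_num) hT_ne_top
  have hre : (2 * (P / ν Ω) * T) * (2 * (P / ν Ω) * T)
      = (2 * T) * (2 * (P / ν Ω) * (P / ν Ω) * T) := by ring
  have hre2 : 2 * T * ν S = (2 * T) * ν S := by ring
  rw [hre, hre2] at hsq2
  have hmain : 2 * (P / ν Ω) * (P / ν Ω) * T ≤ ν S :=
    (ENNReal.mul_le_mul_iff_right hT2 hT2top).mp hsq2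
  have hmul := mul_le_mul_left hmain (ν Ω * ν Ω)
  have hcancel : P / ν Ω * ν Ω = P := ENNReal.div_mul_cancel h0.ne' hνΩ_ne_top
  have hLHS2 : 2 * (P / ν Ω) * (P / ν Ω) * T * (ν Ω * ν Ω) = T * (2 * P ^ 2) := by
    calc 2 * (P / ν Ω) * (P / ν Ω) * T * (ν Ω * ν Ω)
        = 2 * (P / ν Ω * ν Ω) * (P / ν Ω * ν Ω) * T := by ring
      _ = 2 * P * P * T := by rw [hcancel]
      _ = T * (2 * P ^ 2) := by ring
  rw [hLHS2] at hmul
  rw [ENNReal.le_div_iff_mul_le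
    (Or.inl (mul_ne_zero (by norm_num) (pow_ne_zero 2 hPpos.ne')))
    (Or.inl (ENNReal.mul_ne_top (by norm_num) (ENNReal.pow_ne_top hP_ne_top)))]
  calc T * (2 * P ^ 2) ≤ ν S * (ν Ω * ν Ω) := hmul
    _ = ν Ω ^ 2 * ν S := by ring

end RandomWalkSpace

/-- `ν(Ω)²/P_m(Ω) ≤ T_m(Ω)`, and if `Ω` is `m`-calibrable
(`h_1^m(Ω) = P_m(Ω)/ν(Ω)`) then `T_m(Ω) ≤ (1/2) ν(Ω)² ν(Ω_m) / P_m(Ω)²`. -/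
theorem polya_makai {X : Type*} [MeasurableSpace X]
    (m : X → Measure X) (ν : Measure X) [SigmaFinite ν]
    (hm : RandomWalkSpace.IsRandomWalk m) (hrev : RandomWalkSpace.Reversible m ν)
    (Ω : Set X) (hΩ : MeasurableSet Ω)
    (hconn : RandomWalkSpace.mConnected m ν Ω)
    (hconnm : RandomWalkSpace.mConnected m ν (RandomWalkSpace.mClosure m Ω))
    (h0 : 0 < ν Ω) (h1 : ν Ω < ν (RandomWalkSpace.mClosure m Ω))
    (h2 : ν (RandomWalkSpace.mClosure m Ω) < ⊤)
    (hpoinc : RandomWalkSpace.PoincareInequality m ν Ω 2)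
    (f : X → ℝ) (hf : RandomWalkSpace.IsStressFunction m ν Ω f) :
    ν Ω ^ 2 / RandomWalkSpace.mPerimeter m ν Ω ≤ ENNReal.ofReal (∫ x in Ω, f x ∂ν) ∧
      (RandomWalkSpace.cheeger1 m ν Ω = RandomWalkSpace.mPerimeter m ν Ω / ν Ω →
        ENNReal.ofReal (∫ x in Ω, f x ∂ν) ≤
          ν Ω ^ 2 * ν (RandomWalkSpace.mClosure m Ω) /
            (2 * RandomWalkSpace.mPerimeter m ν Ω ^ 2)) := by
  
  classical
  obtain ⟨hprob, hmeas⟩ := hm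
  set Γ : Set X := RandomWalkSpace.mBoundary m Ω with hΓdef
  set S : Set X := RandomWalkSpace.mClosure m Ω with hSdef
  have hΓmeas : MeasurableSet Γ := by
    have hset : Γ = Ωᶜ ∩ {x | 0 < m x Ω} := by
      ext x; simp [hΓdef, RandomWalkSpace.mBoundary, Set.mem_setOf_eq]
    rw [hset]
    exact hΩ.compl.inter (measurableSet_lt measurable_const (hmeas Ω hΩ))
  have hSmeas : MeasurableSet S := hΩ.union hΓmeas
  have hΩS : Ω ⊆ S := Set.subset_union_left
  have hdisj : Disjoint Ω Γ := by
    rw [Set.disjoint_left]; intro x hx hx'; exact hx'.1 hx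
  haveI : IsFiniteMeasure (ν.restrict S) := ⟨by rw [Measure.restrict_apply_univ]; exact h2⟩
  have hm1 : ∀ (x : X) (A : Set X), m x A ≤ 1 := fun x A => by
    haveI := hprob x
    exact (measure_mono (Set.subset_univ A)).trans (by rw [measure_univ])
  obtain ⟨⟨hfL2, hfbd⟩, hfnn, hfeq⟩ := hf
  have h22 : (ENNReal.ofReal (2:ℝ)) = (2:ℝ≥0∞) := by norm_num
  rw [h22] at hfL2
  have hfaesm : AEStronglyMeasurable f (ν.restrict S) := hfL2.1
  set g0 : X → ℝ := hfaesm.mk f with hg0def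
  have hg0meas : Measurable g0 := hfaesm.stronglyMeasurable_mk.measurable
  set g : X → ℝ := fun x => if x ∈ Ω then max (g0 x) 0 else 0 with hgdef
  have hgm : Measurable g := Measurable.ite hΩ (hg0meas.max measurable_const) measurable_const
  have hg0 : ∀ x, 0 ≤ g x := by
    intro x
    rw [hgdef]
    dsimp only
    split
    · exact le_max_right _ _
    · exact le_rfl
  have hgsupp : ∀ x, x ∉ Ω → g x = 0 := by
    intro x hx
    rw [hgdef]
    exact if_neg hx
  have hΩae : ∀ᵐ x ∂ν.restrict Ω, f x = g x := by
    have h1' : ∀ᵐ x ∂ν.restrict Ω, f x = g0 x :=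
      ae_restrict_of_ae_restrict_of_subset hΩS hfaesm.ae_eq_mk
    have h2' : ∀ᵐ x ∂ν.restrict Ω, 0 ≤ f x :=
      ae_restrict_of_ae_restrict_of_subset hΩS hfnn
    filter_upwards [ae_restrict_mem hΩ, h1', h2'] with x hxΩ hx1 hx2
    rw [hgdef]
    dsimp only
    rw [if_pos hxΩ, ← hx1, max_eq_left hx2]
  have hΓae : ∀ᵐ x ∂ν.restrict Γ, f x = g x := by
    filter_upwards [ae_restrict_mem hΓmeas, hfbd] with x hxΓ hx0
    rw [hgdef]
    dsimp only
    rw [if_neg hxΓ.1, hx0]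
  have hfg : f =ᵐ[ν.restrict S] g := by
    have hres : ν.restrict S = ν.restrict Ω + ν.restrict Γ := by
      have hSU : S = Ω ∪ Γ := rfl
      rw [hSU]
      exact Measure.restrict_union hdisj hΓmeas
    rw [Filter.EventuallyEq, hres, ae_add_measure_iff]
    exact ⟨hΩae, hΓae⟩
  have hgL2mem : MemLp g 2 (ν.restrict S) := hfL2.ae_eq hfg
  have hgL2 : ∫⁻ x in S, ENNReal.ofReal (g x ^ 2) ∂ν < ⊤ := by
    have hint := hgL2mem.integrable_sq
    calc ∫⁻ x in S, ENNReal.ofReal (g x ^ 2) ∂ν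
        = ∫⁻ x in S, (‖g x ^ 2‖₊ : ℝ≥0∞) ∂ν :=
          lintegral_congr fun x => (Real.enorm_eq_ofReal (sq_nonneg _)).symm
      _ < ⊤ := hint.2
  have hgint : Integrable g (ν.restrict S) := hgL2mem.integrable (by norm_num)
  -- transfer the stress equation
  have hnull : (ν.restrict S) {x | f x ≠ g x} = 0 := ae_iff.mp hfg
  obtain ⟨N, hNsub, hNmeas, hNnull⟩ := exists_measurable_superset_of_null hnull
  rw [Measure.restrict_apply hNmeas] at hNnull
  have haeN : ∀ᵐ x ∂ν.restrict Ω, m x (N ∩ S) = 0 := by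
    have hzero : ∫⁻ x in Ω, m x (N ∩ S) ∂ν = 0 := by
      rw [hrev Ω (N ∩ S) hΩ (hNmeas.inter hSmeas)]
      refine le_antisymm ?_ zero_le
      calc ∫⁻ x in N ∩ S, m x Ω ∂ν ≤ ∫⁻ _ in N ∩ S, 1 ∂ν := lintegral_mono fun x => hm1 x Ω
        _ = ν (N ∩ S) := by simp
        _ = 0 := hNnull
    exact (lintegral_eq_zero_iff (hmeas _ (hNmeas.inter hSmeas))).mp hzero
  have hstress : ∀ᵐ x ∂ν.restrict Ω, -∫ y in S, (g y - g x) ∂(m x) = 1 := by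
    filter_upwards [haeN, hfeq, hΩae] with x hxN hxeq hxfg
    have haeY : ∀ᵐ y ∂(m x).restrict S, f y = g y := by
      rw [ae_iff]
      refine measure_mono_null (fun y hy => hNsub hy) ?_
      rw [Measure.restrict_apply hNmeas]
      exact hxN
    have hintc : ∫ y in S, (f y - f x) ∂(m x) = ∫ y in S, (g y - g x) ∂(m x) := by
      refine integral_congr_ae ?_
      filter_upwards [haeY] with y hy
      rw [hy, hxfg]
    rw [← hintc]
    exact hxeq
  have hmaster := RandomWalkSpace.master m ν hprob hmeas hrev Ω hΩ hconnm h0 h1 h2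
    g hgm hg0 hgsupp hgL2 hstress
  have hTeq : ENNReal.ofReal (∫ x in Ω, f x ∂ν) = ∫⁻ x in Ω, ENNReal.ofReal (g x) ∂ν := by
    have hIeq : ∫ x in Ω, f x ∂ν = ∫ x in Ω, g x ∂ν := integral_congr_ae hΩae
    rw [hIeq]
    have hgintΩ : Integrable g (ν.restrict Ω) :=
      hgint.mono_measure (Measure.restrict_mono hΩS le_rfl)
    exact ofReal_integral_eq_lintegral_ofReal hgintΩ (Filter.Eventually.of_forall hg0)
  rw [hTeq]
  exact hmaster
end
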